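/- arXiv:1001.1766 — 7 statements merged into one kernel-verified Lean document; each statement's English description precedes it below -/
import Mathlib

section
/- Let 𝕂 be a field of characteristic zero and let δ = ∂/∂X + Y·∂/∂Y acting on 𝕂[X,Y]. Let M be a positive integer and D₀, D₁, S₁, …, S_M natural numbers satisfying S₁ + ⋯ + S_M > (D₀ + M)(D₁ + 1) − M. Let (ζ₁, η₁), …, (ζ_M, η_M) be pairs in 𝕂 × 𝕂* such that ζ₁, …, ζ_M are pairwise distinct. Then there is no nonzero polynomial P ∈ 𝕂[X,Y] of degree ≤ D₀ in X and degree ≤ D₁ in Y such that δ^σ P(ζ_κ, η_κ) = 0 for all σ, κ with 0 ≤ σ < S_κ and 1 ≤ κ ≤ M. -/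
set_option maxHeartbeats 1000000

open MvPolynomial

noncomputable def deltaOp (𝕂 : Type*) [CommSemiring 𝕂] (P : MvPolynomial (Fin 2) 𝕂) :
    MvPolynomial (Fin 2) 𝕂 :=
  pderiv 0 P + X 1 * pderiv 1 P

namespace ZeroEst

set_option linter.unusedSectionVars false

variable {𝕂 : Type*} [Field 𝕂] [CharZero 𝕂]

/-- The operator `u ↦ u' + j u` on `𝕂[X]`. -/
noncomputable def L (j : ℕ) (u : Polynomial 𝕂) : Polynomial 𝕂 :=
  Polynomial.derivative u + (j : 𝕂) • u

lemma natDegree_L_le {j : ℕ} {u : Polynomial 𝕂} {d : ℕ} (h : u.natDegree ≤ d) :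
    (L j u).natDegree ≤ d := by
  refine (Polynomial.natDegree_add_le _ _).trans (max_le ?_ ?_)
  · exact le_trans (Polynomial.natDegree_derivative_le u) (le_trans (Nat.sub_le _ _) h)
  · exact (Polynomial.natDegree_smul_le _ _).trans h

lemma natDegree_L_iter_le {j : ℕ} {u : Polynomial 𝕂} {d : ℕ} (h : u.natDegree ≤ d) (i : ℕ) :
    ((L j)^[i] u).natDegree ≤ d := by
  induction i with
  | zero => simpa using h
  | succ i ih =>
    rw [Function.iterate_succ_apply']
    exact natDegree_L_le ih

lemma coeff_L_iter_top {j : ℕ} {u : Polynomial 𝕂} {d : ℕ} (h : u.natDegree ≤ d) (i : ℕ) :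
    ((L j)^[i] u).coeff d = (j : 𝕂) ^ i * u.coeff d := by
  induction i with
  | zero => simp
  | succ i ih =>
    rw [Function.iterate_succ_apply', L]
    have hd : ((L j)^[i] u).natDegree ≤ d := natDegree_L_iter_le h i
    have hder : (Polynomial.derivative ((L j)^[i] u)).coeff d = 0 := by
      rw [Polynomial.coeff_derivative,
        Polynomial.coeff_eq_zero_of_natDegree_lt (lt_of_le_of_lt hd (Nat.lt_succ_self d)),
        zero_mul]
    rw [Polynomial.coeff_add, hder, Polynomial.coeff_smul, ih, zero_add, smul_eq_mul, pow_succ]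
    ring


/-- `r(X) ↦ r(ζ + X)` as a power series. -/
noncomputable def phi (ζ : 𝕂) : Polynomial 𝕂 →+* PowerSeries 𝕂 :=
  Polynomial.coeToPowerSeries.ringHom.comp
    (Polynomial.eval₂RingHom Polynomial.C (Polynomial.X + Polynomial.C ζ))

lemma phi_apply (ζ : 𝕂) (r : Polynomial 𝕂) :
    phi ζ r = ((r.comp (Polynomial.X + Polynomial.C ζ) : Polynomial 𝕂) : PowerSeries 𝕂) := rfl

lemma phi_C (ζ a : 𝕂) : phi ζ (Polynomial.C a) = PowerSeries.C a := by
  simp [phi_apply, Polynomial.coe_C]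

lemma phi_X (ζ : 𝕂) :
    phi ζ Polynomial.X = PowerSeries.X + PowerSeries.C ζ := by
  simp [phi_apply, Polynomial.coe_add, Polynomial.coe_C, Polynomial.coe_X]

lemma phi_derivative (ζ : 𝕂) (r : Polynomial 𝕂) :
    PowerSeries.derivative 𝕂 (phi ζ r) = phi ζ (Polynomial.derivative r) := by
  rw [phi_apply, phi_apply, PowerSeries.derivative_coe, Polynomial.derivative_comp]
  simp

lemma derivative_exp :
    PowerSeries.derivative 𝕂 (PowerSeries.exp 𝕂) = PowerSeries.exp 𝕂 := by
  ext n
  rw [PowerSeries.coeff_derivative, PowerSeries.coeff_exp, PowerSeries.coeff_exp]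
  rw [show ((n : 𝕂) + 1) = algebraMap ℚ 𝕂 ((n : ℚ) + 1) by push_cast; simp]
  rw [← map_mul]
  congr 1
  rw [Nat.factorial_succ]
  push_cast
  have h1 : ((n : ℚ) + 1) ≠ 0 := by positivity
  have h2 : ((Nat.factorial n : ℚ)) ≠ 0 := Nat.cast_ne_zero.mpr (Nat.factorial_ne_zero n)
  field_simp

/-- The evaluation `P(X,Y) ↦ P(ζ + t, η e^t)`. -/
noncomputable def Theta (ζ η : 𝕂) : MvPolynomial (Fin 2) 𝕂 →ₐ[𝕂] PowerSeries 𝕂 :=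
  aeval ![PowerSeries.C ζ + PowerSeries.X, PowerSeries.C η * PowerSeries.exp 𝕂]

lemma deltaOp_C (a : 𝕂) : deltaOp 𝕂 (C a) = 0 := by
  simp [deltaOp]

lemma deltaOp_add (p q : MvPolynomial (Fin 2) 𝕂) :
    deltaOp 𝕂 (p + q) = deltaOp 𝕂 p + deltaOp 𝕂 q := by
  simp [deltaOp]; ring

lemma deltaOp_mul (p q : MvPolynomial (Fin 2) 𝕂) :
    deltaOp 𝕂 (p * q) = deltaOp 𝕂 p * q + p * deltaOp 𝕂 q := by
  simp [deltaOp, pderiv_mul]; ring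

lemma deltaOp_X0 : deltaOp 𝕂 (X 0) = 1 := by
  simp [deltaOp, pderiv_X_self, pderiv_X_of_ne (show (0 : Fin 2) ≠ 1 by decide)]

lemma deltaOp_X1 : deltaOp 𝕂 (X 1) = X 1 := by
  simp [deltaOp, pderiv_X_self, pderiv_X_of_ne (show (1 : Fin 2) ≠ 0 by decide)]

lemma derivative_Cexp (η : 𝕂) :
    PowerSeries.derivative 𝕂 (PowerSeries.C η * PowerSeries.exp 𝕂)
      = PowerSeries.C η * PowerSeries.exp 𝕂 := by
  rw [Derivation.leibniz, derivative_exp]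
  simp [smul_eq_mul, mul_comm]

lemma Theta_deltaOp (ζ η : 𝕂) (P : MvPolynomial (Fin 2) 𝕂) :
    Theta ζ η (deltaOp 𝕂 P) = PowerSeries.derivative 𝕂 (Theta ζ η P) := by
  induction P using MvPolynomial.induction_on with
  | C a => rw [deltaOp_C]; simp [Theta]
  | add p q hp hq => rw [deltaOp_add, map_add, hp, hq, map_add, map_add]
  | mul_X p i hp =>
    rw [deltaOp_mul, map_add, map_mul, map_mul, hp, map_mul, Derivation.leibniz,
      smul_eq_mul, smul_eq_mul]
    have hX : Theta ζ η (deltaOp 𝕂 (X i)) = PowerSeries.derivative 𝕂 (Theta ζ η (X i)) := by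
      fin_cases i
      · show Theta ζ η (deltaOp 𝕂 (X 0)) = PowerSeries.derivative 𝕂 (Theta ζ η (X 0))
        rw [deltaOp_X0, map_one]
        simp [Theta, aeval_X]
      · show Theta ζ η (deltaOp 𝕂 (X 1)) = PowerSeries.derivative 𝕂 (Theta ζ η (X 1))
        rw [deltaOp_X1]
        simp only [Theta, aeval_X, Matrix.cons_val_one, Matrix.head_cons, Matrix.cons_val_zero]
        rw [derivative_Cexp]
    rw [hX]
    ring


lemma Theta_deltaOp_iter (ζ η : 𝕂) (P : MvPolynomial (Fin 2) 𝕂) (σ : ℕ) :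
    Theta ζ η ((deltaOp 𝕂)^[σ] P)
      = (fun f => PowerSeries.derivative 𝕂 f)^[σ] (Theta ζ η P) := by
  induction σ generalizing P with
  | zero => rfl
  | succ σ ih =>
    rw [Function.iterate_succ_apply, Function.iterate_succ_apply, ih, Theta_deltaOp]

lemma constantCoeff_derivative_iter (G : PowerSeries 𝕂) (σ : ℕ) :
    PowerSeries.constantCoeff ((fun f => PowerSeries.derivative 𝕂 f)^[σ] G)
      = (σ.factorial : 𝕂) * PowerSeries.coeff σ G := by
  induction σ generalizing G with
  | zero => simp [PowerSeries.coeff_zero_eq_constantCoeff]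
  | succ σ ih =>
    rw [Function.iterate_succ_apply, ih, PowerSeries.coeff_derivative, Nat.factorial_succ]
    push_cast
    ring

lemma constantCoeff_Theta (ζ η : 𝕂) (P : MvPolynomial (Fin 2) 𝕂) :
    PowerSeries.constantCoeff (Theta ζ η P) = eval ![ζ, η] P := by
  have h : (PowerSeries.constantCoeff).comp (Theta ζ η : MvPolynomial (Fin 2) 𝕂 →+* _)
      = eval ![ζ, η] := by
    apply MvPolynomial.ringHom_ext
    · intro a
      simp only [RingHom.coe_comp, Function.comp_apply, AlgHom.coe_toRingHom]
      rw [show ((C a : MvPolynomial (Fin 2) 𝕂)) = algebraMap 𝕂 _ a from rfl, AlgHom.commutes]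
      simp [PowerSeries.algebraMap_apply]
    · intro i
      fin_cases i
      · show PowerSeries.constantCoeff (Theta ζ η (X 0)) = eval ![ζ, η] (X 0)
        simp [Theta]
      · show PowerSeries.constantCoeff (Theta ζ η (X 1)) = eval ![ζ, η] (X 1)
        simp [Theta, PowerSeries.constantCoeff_exp]
  exact DFunLike.congr_fun h P

lemma X_pow_dvd_Theta (ζ η : 𝕂) (P : MvPolynomial (Fin 2) 𝕂) (s : ℕ)
    (h : ∀ σ < s, eval ![ζ, η] ((deltaOp 𝕂)^[σ] P) = 0) :
    (PowerSeries.X : PowerSeries 𝕂) ^ s ∣ Theta ζ η P := by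
  rw [PowerSeries.X_pow_dvd_iff]
  intro m hm
  have h1 := constantCoeff_derivative_iter (Theta ζ η P) m
  rw [← Theta_deltaOp_iter, constantCoeff_Theta, h m hm] at h1
  have h2 : (m.factorial : 𝕂) ≠ 0 := Nat.cast_ne_zero.mpr (Nat.factorial_ne_zero m)
  exact (mul_eq_zero.mp h1.symm).resolve_left h2

lemma X_pow_dvd_derivative_iter (G : PowerSeries 𝕂) (s : ℕ)
    (h : (PowerSeries.X : PowerSeries 𝕂) ^ s ∣ G) (i : ℕ) :
    (PowerSeries.X : PowerSeries 𝕂) ^ (s - i) ∣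
      (fun f => PowerSeries.derivative 𝕂 f)^[i] G := by
  induction i generalizing G s with
  | zero => simpa using h
  | succ i ih =>
    rw [Function.iterate_succ_apply]
    have hd : (PowerSeries.X : PowerSeries 𝕂) ^ (s - 1) ∣ PowerSeries.derivative 𝕂 G := by
      rw [PowerSeries.X_pow_dvd_iff] at h ⊢
      intro m hm
      rw [PowerSeries.coeff_derivative, h (m + 1) (by omega), zero_mul]
    have := ih _ _ hd
    rwa [Nat.sub_sub, Nat.add_comm 1 i] at this


/-- Separate the two variables: `X 0 ↦ C X` (inner), `X 1 ↦ X` (outer). -/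
noncomputable def Phi : MvPolynomial (Fin 2) 𝕂 →ₐ[𝕂] Polynomial (Polynomial 𝕂) :=
  aeval ![Polynomial.C Polynomial.X, Polynomial.X]

noncomputable def Psi : Polynomial (Polynomial 𝕂) →+* MvPolynomial (Fin 2) 𝕂 :=
  Polynomial.eval₂RingHom
    (Polynomial.aeval (X 0 : MvPolynomial (Fin 2) 𝕂)).toRingHom (X 1)

lemma Psi_Phi (P : MvPolynomial (Fin 2) 𝕂) : Psi (Phi P : Polynomial (Polynomial 𝕂)) = P := by
  have h : Psi.comp (Phi : MvPolynomial (Fin 2) 𝕂 →ₐ[𝕂] _).toRingHom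
      = RingHom.id (MvPolynomial (Fin 2) 𝕂) := by
    apply MvPolynomial.ringHom_ext
    · intro a
      simp [Phi, Psi]
    · intro i
      fin_cases i
      · show Psi (Phi (X 0 : MvPolynomial (Fin 2) 𝕂)) = X 0
        simp [Phi, Psi]
      · show Psi (Phi (X 1 : MvPolynomial (Fin 2) 𝕂)) = X 1
        simp [Phi, Psi]
  exact DFunLike.congr_fun h P

lemma Phi_inj : Function.Injective (Phi : MvPolynomial (Fin 2) 𝕂 →ₐ[𝕂] _) := by
  intro a b hab
  have := congrArg Psi hab
  rwa [Psi_Phi, Psi_Phi] at this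

lemma Phi_apply (P : MvPolynomial (Fin 2) 𝕂) :
    (Phi P : Polynomial (Polynomial 𝕂)) = ∑ m ∈ P.support,
      Polynomial.C (Polynomial.C (coeff m P) * Polynomial.X ^ (m 0)) * Polynomial.X ^ (m 1) := by
  conv_lhs => rw [← support_sum_monomial_coeff P, map_sum]
  refine Finset.sum_congr rfl fun m _ => ?_
  rw [Phi, aeval_monomial]
  rw [Finsupp.prod_fintype _ _ (fun i => pow_zero _), Fin.prod_univ_two]
  simp only [Matrix.cons_val_zero, Matrix.cons_val_one, Matrix.head_cons]
  rw [show (algebraMap 𝕂 (Polynomial (Polynomial 𝕂))) (coeff m P)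
      = Polynomial.C (Polynomial.C (coeff m P)) from rfl, ← Polynomial.C_pow, ← mul_assoc,
    ← Polynomial.C_mul]

lemma natDegree_Phi_le {P : MvPolynomial (Fin 2) 𝕂} {D₁ : ℕ} (h : degreeOf 1 P ≤ D₁) :
    (Phi P : Polynomial (Polynomial 𝕂)).natDegree ≤ D₁ := by
  rw [Phi_apply]
  apply Polynomial.natDegree_sum_le_of_forall_le
  intro m hm
  refine (Polynomial.natDegree_mul_le).trans ?_
  rw [Polynomial.natDegree_C, zero_add]
  refine (Polynomial.natDegree_X_pow_le _).trans ?_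
  exact le_trans (degreeOf_le_iff.mp h m hm) le_rfl

lemma natDegree_coeff_Phi {P : MvPolynomial (Fin 2) 𝕂} {D₀ : ℕ} (h : degreeOf 0 P ≤ D₀)
    (j : ℕ) : ((Phi P : Polynomial (Polynomial 𝕂)).coeff j).natDegree ≤ D₀ := by
  rw [Phi_apply, Polynomial.finset_sum_coeff]
  apply Polynomial.natDegree_sum_le_of_forall_le
  intro m hm
  rw [Polynomial.coeff_C_mul, Polynomial.coeff_X_pow]
  by_cases hj : j = m 1
  · rw [if_pos hj, mul_one]
    refine (Polynomial.natDegree_mul_le).trans ?_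
    rw [Polynomial.natDegree_C, zero_add]
    refine (Polynomial.natDegree_X_pow_le _).trans ?_
    exact degreeOf_le_iff.mp h m hm
  · rw [if_neg hj, mul_zero, Polynomial.natDegree_zero]
    exact Nat.zero_le _

lemma Theta_eq_eval₂_Phi (ζ η : 𝕂) (P : MvPolynomial (Fin 2) 𝕂) :
    Theta ζ η P = Polynomial.eval₂ (phi ζ)
      (PowerSeries.C η * PowerSeries.exp 𝕂) (Phi P) := by
  have h : (Polynomial.eval₂RingHom (phi ζ)
        (PowerSeries.C η * PowerSeries.exp 𝕂)).comp
        (Phi : MvPolynomial (Fin 2) 𝕂 →ₐ[𝕂] _).toRingHom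
      = (Theta ζ η : MvPolynomial (Fin 2) 𝕂 →ₐ[𝕂] _).toRingHom := by
    apply MvPolynomial.ringHom_ext
    · intro a
      simp only [RingHom.coe_comp, Function.comp_apply, AlgHom.toRingHom_eq_coe,
        RingHom.coe_coe]
      rw [show ((C a : MvPolynomial (Fin 2) 𝕂)) = algebraMap 𝕂 _ a from rfl, AlgHom.commutes,
        AlgHom.commutes]
      rw [show (algebraMap 𝕂 (Polynomial (Polynomial 𝕂))) a
        = Polynomial.C (Polynomial.C a) from rfl,
        Polynomial.coe_eval₂RingHom, Polynomial.eval₂_C, phi_C]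
      simp [PowerSeries.algebraMap_apply]
    · intro i
      fin_cases i
      · show Polynomial.eval₂ (phi ζ) _ (Phi (X 0 : MvPolynomial (Fin 2) 𝕂)) = Theta ζ η (X 0)
        simp only [Phi, Theta, aeval_X, Matrix.cons_val_zero]
        rw [Polynomial.eval₂_C, phi_X]
        ring
      · show Polynomial.eval₂ (phi ζ) _ (Phi (X 1 : MvPolynomial (Fin 2) 𝕂)) = Theta ζ η (X 1)
        simp [Phi, Theta]
  exact (DFunLike.congr_fun h P).symm


lemma coeff_prod' {ι : Type*} (s : Finset ι) (f : ι → Polynomial 𝕂) (n : ι → ℕ)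
    (h : ∀ i ∈ s, (f i).natDegree ≤ n i) :
    (∏ i ∈ s, f i).coeff (∑ i ∈ s, n i) = ∏ i ∈ s, (f i).coeff (n i) := by
  classical
  induction s using Finset.induction_on with
  | empty => simp
  | @insert a s ha ih =>
    rw [Finset.prod_insert ha, Finset.sum_insert ha, Finset.prod_insert ha,
      Polynomial.coeff_mul_add_eq_of_natDegree_le (h a (Finset.mem_insert_self a s))
        ((Polynomial.natDegree_prod_le _ _).trans
          (Finset.sum_le_sum fun i hi => h i (Finset.mem_insert_of_mem hi))),
      ih fun i hi => h i (Finset.mem_insert_of_mem hi)]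

/-- the unit `η e^t`. -/
noncomputable def uexp (η : 𝕂) : PowerSeries 𝕂 := PowerSeries.C η * PowerSeries.exp 𝕂

lemma isUnit_uexp {η : 𝕂} (hη : η ≠ 0) : IsUnit (uexp η) := by
  rw [PowerSeries.isUnit_iff_constantCoeff]
  simp [uexp, PowerSeries.constantCoeff_exp, hη]

lemma derivative_uexp_pow (η : 𝕂) (j : ℕ) :
    PowerSeries.derivative 𝕂 (uexp η ^ j) = (j : PowerSeries 𝕂) * uexp η ^ j := by
  cases j with
  | zero => simp
  | succ j =>
    rw [Derivation.leibniz_pow,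
      show (PowerSeries.derivative 𝕂) (uexp η) = uexp η from derivative_Cexp η,
      smul_eq_mul, nsmul_eq_mul, Nat.add_sub_cancel]
    push_cast
    ring

lemma deriv_term (ζ η : 𝕂) (j : ℕ) (r : Polynomial 𝕂) :
    PowerSeries.derivative 𝕂 (phi ζ r * uexp η ^ j) = phi ζ (L j r) * uexp η ^ j := by
  rw [Derivation.leibniz, smul_eq_mul, smul_eq_mul, derivative_uexp_pow, phi_derivative, L,
    map_add]
  rw [show phi ζ ((j : 𝕂) • r) = PowerSeries.C (j : 𝕂) * phi ζ r by
    rw [Polynomial.smul_eq_C_mul, map_mul, phi_C]]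
  rw [map_natCast (PowerSeries.C (R := 𝕂)) j]
  ring


lemma dvd_of_phi_dvd (ζ : 𝕂) (Q : Polynomial 𝕂) (m : ℕ)
    (h : (PowerSeries.X : PowerSeries 𝕂) ^ m ∣ phi ζ Q) :
    (Polynomial.X - Polynomial.C ζ) ^ m ∣ Q := by
  have hcomp : (Polynomial.X : Polynomial 𝕂) ^ m ∣ Q.comp (Polynomial.X + Polynomial.C ζ) := by
    rw [Polynomial.X_pow_dvd_iff]
    intro i hi
    have := (PowerSeries.X_pow_dvd_iff.mp h) i hi
    rwa [phi_apply, Polynomial.coeff_coe] at this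
  obtain ⟨w, hw⟩ := hcomp
  have hXc : (Polynomial.X + Polynomial.C ζ).comp (Polynomial.X - Polynomial.C ζ)
      = (Polynomial.X : Polynomial 𝕂) := by
    rw [Polynomial.add_comp, Polynomial.X_comp, Polynomial.C_comp, sub_add_cancel]
  have hQ : Q = (Q.comp (Polynomial.X + Polynomial.C ζ)).comp
      (Polynomial.X - Polynomial.C ζ) := by
    rw [Polynomial.comp_assoc, hXc, Polynomial.comp_X]
  rw [hQ, hw, Polynomial.mul_comp, Polynomial.pow_comp, Polynomial.X_comp]
  exact Dvd.intro _ rfl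

theorem core (q : Polynomial (Polynomial 𝕂)) (hq : q ≠ 0) (D₀ : ℕ)
    (hdeg : ∀ j, (q.coeff j).natDegree ≤ D₀)
    (M : ℕ) (ζ η : Fin M → 𝕂) (hη : ∀ κ, η κ ≠ 0) (hζ : Function.Injective ζ)
    (S : Fin M → ℕ)
    (hdvd : ∀ κ, (PowerSeries.X : PowerSeries 𝕂) ^ (S κ) ∣
      Polynomial.eval₂ (phi (ζ κ)) (uexp (η κ)) q) :
    ∑ κ, S κ ≤ q.support.card * D₀ + M * (q.support.card - 1) := by
  classical
  set J := q.support with hJdef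
  have hJ : J.Nonempty := Polynomial.support_nonempty.mpr hq
  set n := J.card with hn
  have npos : 0 < n := Finset.card_pos.mpr hJ
  set e : Fin n → ℕ := fun a => ((J.orderIsoOfFin rfl) a : ℕ) with he
  have he_mem : ∀ a, e a ∈ J := fun a => ((J.orderIsoOfFin rfl) a).2
  have he_inj : Function.Injective e := fun a b hab => by
    have := Subtype.ext (p := fun x => x ∈ J) hab
    exact (J.orderIsoOfFin rfl).injective this
  have hsum_reindex : ∀ (F : ℕ → PowerSeries 𝕂), ∑ a : Fin n, F (e a) = ∑ j ∈ J, F j := by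
    intro F
    rw [← Finset.sum_coe_sort J F]
    exact Fintype.sum_equiv (J.orderIsoOfFin rfl).toEquiv _ _ (fun a => rfl)
  -- the coefficients and their degrees
  set p : Fin n → Polynomial 𝕂 := fun a => q.coeff (e a) with hp
  have hp_ne : ∀ a, p a ≠ 0 := fun a => Polynomial.mem_support_iff.mp (he_mem a)
  set d : Fin n → ℕ := fun a => (p a).natDegree with hd
  have hdD : ∀ a, d a ≤ D₀ := fun a => hdeg (e a)
  -- the Wronskian-type matrix and its determinant
  set Mat : Matrix (Fin n) (Fin n) (Polynomial 𝕂) :=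
    Matrix.of fun a b => (L (e a))^[(b : ℕ)] (p a) with hMat
  set Q : Polynomial 𝕂 := Mat.det with hQdef
  set N : ℕ := ∑ a, d a with hN
  -- top coefficient of Q
  have hQcoeff : Q.coeff N = (Matrix.of fun a b : Fin n =>
      (p a).leadingCoeff * ((e a : 𝕂) ^ (b : ℕ))).det := by
    rw [hQdef, Matrix.det_apply', Matrix.det_apply', Polynomial.finset_sum_coeff]
    refine Finset.sum_congr rfl fun σ _ => ?_
    rw [← Polynomial.C_eq_intCast, Polynomial.coeff_C_mul]
    congr 1
    rw [hN, ← Equiv.sum_comp σ d]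
    have hcp := coeff_prod' (Finset.univ) (fun b => Mat (σ b) b) (fun b => d (σ b))
      (fun b _ => natDegree_L_iter_le le_rfl _)
    rw [hcp]
    refine Finset.prod_congr rfl fun b _ => ?_
    show ((L (e (σ b)))^[(b : ℕ)] (p (σ b))).coeff (d (σ b))
      = (p (σ b)).leadingCoeff * ((e (σ b) : 𝕂) ^ (b : ℕ))
    rw [coeff_L_iter_top le_rfl, mul_comm]
    rfl
  have hQcoeff_ne : Q.coeff N ≠ 0 := by
    rw [hQcoeff]
    rw [show (Matrix.of fun a b : Fin n => (p a).leadingCoeff * ((e a : 𝕂) ^ (b : ℕ)))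
        = Matrix.of fun a b : Fin n =>
          (p a).leadingCoeff * (Matrix.vandermonde fun a => (e a : 𝕂)) a b from rfl,
      Matrix.det_mul_column, Matrix.det_vandermonde]
    apply mul_ne_zero
    · rw [Finset.prod_ne_zero_iff]
      exact fun a _ => Polynomial.leadingCoeff_ne_zero.mpr (hp_ne a)
    · rw [Finset.prod_ne_zero_iff]
      intro a _
      rw [Finset.prod_ne_zero_iff]
      intro b hb
      have hab : a ≠ b := (Finset.mem_Ioi.mp hb).ne
      have : e a ≠ e b := fun h => hab (he_inj h)
      have : (e a : 𝕂) ≠ (e b : 𝕂) := fun h => this (Nat.cast_injective h)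
      exact sub_ne_zero.mpr (Ne.symm this)
  have hQne : Q ≠ 0 := fun h => hQcoeff_ne (by rw [h, Polynomial.coeff_zero])
  have hQdeg : Q.natDegree ≤ N := by
    rw [hQdef, Matrix.det_apply']
    apply Polynomial.natDegree_sum_le_of_forall_le
    intro σ _
    refine (Polynomial.natDegree_mul_le).trans ?_
    rw [Polynomial.natDegree_intCast, zero_add]
    refine (Polynomial.natDegree_prod_le _ _).trans ?_
    rw [hN, ← Equiv.sum_comp σ d]
    exact Finset.sum_le_sum fun b _ => natDegree_L_iter_le le_rfl _
  -- multiplicity at each point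
  have hmult : ∀ κ, (Polynomial.X - Polynomial.C (ζ κ)) ^ (S κ - (n - 1)) ∣ Q := by
    intro κ
    set u : PowerSeries 𝕂 := uexp (η κ) with hu
    set A : Matrix (Fin n) (Fin n) (PowerSeries 𝕂) :=
      Matrix.of fun a b => u ^ (e a) * phi (ζ κ) (Mat a b) with hA
    set G : PowerSeries 𝕂 := Polynomial.eval₂ (phi (ζ κ)) u q with hG
    have hrowsum : ∀ i : ℕ, ∑ a, u ^ (e a) * phi (ζ κ) ((L (e a))^[i] (p a))
        = (fun f => PowerSeries.derivative 𝕂 f)^[i] G := by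
      intro i
      induction i with
      | zero =>
        simp only [Function.iterate_zero, id_eq]
        rw [hG, Polynomial.eval₂_eq_sum, Polynomial.sum_def]
        rw [← hsum_reindex (fun j => phi (ζ κ) (q.coeff j) * u ^ j)]
        exact Finset.sum_congr rfl fun a _ => by rw [mul_comm]
      | succ i ih =>
        rw [Function.iterate_succ_apply', ← ih, map_sum]
        refine Finset.sum_congr rfl fun a _ => ?_
        rw [show u ^ e a * phi (ζ κ) ((L (e a))^[i] (p a))
            = phi (ζ κ) ((L (e a))^[i] (p a)) * u ^ e a by ring,
          deriv_term, Function.iterate_succ_apply']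
        ring
    have hcolsum_dvd : ∀ b : Fin n,
        (PowerSeries.X : PowerSeries 𝕂) ^ (S κ - (n - 1)) ∣ ∑ a, A a b := by
      intro b
      have h1 : ∑ a, A a b = (fun f => PowerSeries.derivative 𝕂 f)^[(b : ℕ)] G := by
        rw [← hrowsum (b : ℕ)]
        rfl
      rw [h1]
      refine dvd_trans (pow_dvd_pow _ ?_) (X_pow_dvd_derivative_iter G (S κ) (hdvd κ) (b : ℕ))
      exact Nat.sub_le_sub_left (Nat.le_pred_of_lt b.2) _
    set a₀ : Fin n := ⟨0, npos⟩ with ha₀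
    set B : Matrix (Fin n) (Fin n) (PowerSeries 𝕂) := A.updateRow a₀ (∑ k, A k) with hB
    have hBA : B.det = A.det := by
      have h := Matrix.det_updateRow_sum A a₀ (fun _ => (1 : PowerSeries 𝕂))
      simp only [one_smul] at h
      rw [hB, h]
    have hXdetB : (PowerSeries.X : PowerSeries 𝕂) ^ (S κ - (n - 1)) ∣ B.det := by
      rw [Matrix.det_apply']
      apply Finset.dvd_sum
      intro σ _
      have hfac : (PowerSeries.X : PowerSeries 𝕂) ^ (S κ - (n - 1))
          ∣ B (σ (σ⁻¹ a₀)) (σ⁻¹ a₀) := by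
        rw [Equiv.Perm.coe_inv, Equiv.apply_symm_apply, hB, Matrix.updateRow_self]
        convert hcolsum_dvd (σ⁻¹ a₀) using 1
        exact Finset.sum_apply _ _ _
      have hprod : (PowerSeries.X : PowerSeries 𝕂) ^ (S κ - (n - 1))
          ∣ ∏ b, B (σ b) b :=
        dvd_trans hfac (Finset.dvd_prod_of_mem (fun b => B (σ b) b) (Finset.mem_univ (σ⁻¹ a₀)))
      exact hprod.mul_left _
    have hdetA : A.det = (∏ a, u ^ (e a)) * phi (ζ κ) Q := by
      rw [hA, show (Matrix.of fun a b => u ^ (e a) * phi (ζ κ) (Mat a b))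
          = Matrix.of fun a b => (fun a => u ^ (e a)) a * (Mat.map (phi (ζ κ))) a b from rfl,
        Matrix.det_mul_column,
        show Mat.map ⇑(phi (ζ κ)) = (phi (ζ κ)).mapMatrix Mat from rfl, ← RingHom.map_det]
    have hXQ : (PowerSeries.X : PowerSeries 𝕂) ^ (S κ - (n - 1)) ∣ phi (ζ κ) Q := by
      have h1 := hXdetB
      rw [hBA, hdetA] at h1
      have hunit : IsUnit (∏ a, u ^ (e a)) := by
        rw [Finset.prod_pow_eq_pow_sum]
        exact (isUnit_uexp (hη κ)).pow _
      exact (IsUnit.dvd_mul_left hunit).mp h1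
    exact dvd_of_phi_dvd _ _ _ hXQ
  -- put the multiplicities together
  have hproddvd : (∏ κ, (Polynomial.X - Polynomial.C (ζ κ)) ^ (S κ - (n - 1))) ∣ Q := by
    apply Finset.prod_dvd_of_coprime
    · intro κ₁ _ κ₂ _ hne
      apply IsCoprime.pow
      apply Polynomial.isCoprime_X_sub_C_of_isUnit_sub
      exact (sub_ne_zero.mpr fun h => hne (hζ h)).isUnit
    · exact fun κ _ => hmult κ
  have hdegprod : (∑ κ, (S κ - (n - 1))) ≤ Q.natDegree := by
    have h1 := Polynomial.natDegree_le_of_dvd hproddvd hQne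
    rwa [Polynomial.natDegree_prod _ _ (fun κ _ => pow_ne_zero _ (Polynomial.X_sub_C_ne_zero _)),
      Finset.sum_congr rfl (fun κ _ => by
        rw [Polynomial.natDegree_pow, Polynomial.natDegree_X_sub_C, mul_one])] at h1
  -- final counting
  have hNle : N ≤ n * D₀ := by
    rw [hN]
    calc ∑ a, d a ≤ ∑ _a : Fin n, D₀ := Finset.sum_le_sum fun a _ => hdD a
    _ = n * D₀ := by rw [Finset.sum_const, Finset.card_univ, Fintype.card_fin, smul_eq_mul]
  calc ∑ κ, S κ ≤ ∑ κ, ((S κ - (n - 1)) + (n - 1)) :=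
        Finset.sum_le_sum fun κ _ => le_tsub_add
    _ = (∑ κ, (S κ - (n - 1))) + M * (n - 1) := by
        rw [Finset.sum_add_distrib, Finset.sum_const, Finset.card_univ, Fintype.card_fin,
          smul_eq_mul]
    _ ≤ Q.natDegree + M * (n - 1) := Nat.add_le_add_right hdegprod _
    _ ≤ n * D₀ + M * (n - 1) := Nat.add_le_add_right (hQdeg.trans hNle) _

end ZeroEst

theorem stmt2 (𝕂 : Type*) [Field 𝕂] [CharZero 𝕂] (M : ℕ) (hM : 0 < M)
    (D₀ D₁ : ℕ) (S : Fin M → ℕ)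
    (hS : (((D₀ + M) * (D₁ + 1) : ℕ) : ℤ) - (M : ℤ) < ((∑ κ, S κ : ℕ) : ℤ))
    (ζ η : Fin M → 𝕂) (hη : ∀ κ, η κ ≠ 0) (hζ : Function.Injective ζ) :
    ¬ ∃ P : MvPolynomial (Fin 2) 𝕂, P ≠ 0 ∧ degreeOf 0 P ≤ D₀ ∧ degreeOf 1 P ≤ D₁ ∧
        ∀ (κ : Fin M) (σ : ℕ), σ < S κ →
          eval ![ζ κ, η κ] ((deltaOp 𝕂)^[σ] P) = 0 := by
  rintro ⟨P, hP0, hPD0, hPD1, hPev⟩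
  classical
  set q : Polynomial (Polynomial 𝕂) := ZeroEst.Phi P with hq
  have hqne : q ≠ 0 := by
    intro h
    apply hP0
    apply ZeroEst.Phi_inj
    rw [← hq, h, map_zero]
  have hdeg : ∀ j, (q.coeff j).natDegree ≤ D₀ := ZeroEst.natDegree_coeff_Phi hPD0
  have hdvd : ∀ κ, (PowerSeries.X : PowerSeries 𝕂) ^ (S κ) ∣
      Polynomial.eval₂ (ZeroEst.phi (ζ κ)) (ZeroEst.uexp (η κ)) q := by
    intro κ
    rw [hq, ZeroEst.uexp, ← ZeroEst.Theta_eq_eval₂_Phi]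
    exact ZeroEst.X_pow_dvd_Theta _ _ _ _ (hPev κ)
  have hcore := ZeroEst.core q hqne D₀ hdeg M ζ η hη hζ S hdvd
  -- bound the number of terms
  have hcard : q.support.card ≤ D₁ + 1 := by
    have hsub : q.support ⊆ Finset.range (D₁ + 1) := by
      intro j hj
      rw [Finset.mem_range, Nat.lt_succ_iff]
      exact le_trans (Polynomial.le_natDegree_of_mem_supp j hj)
        (ZeroEst.natDegree_Phi_le hPD1)
    simpa using Finset.card_le_card hsub
  have hfinal : ∑ κ, S κ ≤ (D₁ + 1) * D₀ + M * D₁ := by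
    refine hcore.trans (Nat.add_le_add ?_ ?_)
    · exact Nat.mul_le_mul_right _ hcard
    · exact Nat.mul_le_mul_left _ (by omega)
  have h1 : (((D₀ + M) * (D₁ + 1) : ℕ) : ℤ) - (M : ℤ)
      = ((D₁ + 1 : ℕ) : ℤ) * (D₀ : ℤ) + (M : ℤ) * (D₁ : ℤ) := by push_cast; ring
  rw [h1] at hS
  have h2 : ((∑ κ, S κ : ℕ) : ℤ) ≤ ((D₁ + 1 : ℕ) : ℤ) * (D₀ : ℤ) + (M : ℤ) * (D₁ : ℤ) := by
    have := hfinal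
    push_cast
    exact_mod_cast this
  omega
end

section
/- For every natural number ν, Σ_{j=0}^{ν} j!·|λ_{j,ν}| ≤ 2^ν. -/
open Polynomial

/-- The Fel'dman polynomial `ℱ_ν(z) = z(z−1)⋯(z−ν+1)/ν!` (equal to `1` for `ν = 0`). -/
noncomputable def feldman (ν : ℕ) : Polynomial ℚ :=
  (ν.factorial : ℚ)⁻¹ • ∏ i ∈ Finset.range ν, (X - C (i : ℚ))

/-- The "unsigned" companion polynomial `∏ (X + i)`. -/
noncomputable def feldQ (ν : ℕ) : Polynomial ℚ :=
  ∏ i ∈ Finset.range ν, (X + C (i : ℚ))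

lemma feldQ_succ (ν : ℕ) : feldQ (ν + 1) = feldQ ν * (X + C (ν : ℚ)) := by
  rw [feldQ, Finset.prod_range_succ, feldQ]

lemma feldP_succ (ν : ℕ) :
    (∏ i ∈ Finset.range (ν + 1), (X - C (i : ℚ))) =
      (∏ i ∈ Finset.range ν, (X - C (i : ℚ))) * (X - C (ν : ℚ)) := by
  rw [Finset.prod_range_succ]

lemma coeff_mul_X_add_C (p : Polynomial ℚ) (r : ℚ) (a : ℕ) :
    (p * (X + C r)).coeff (a + 1) = p.coeff a + p.coeff (a + 1) * r := by
  simp [mul_add]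

lemma coeff_zero_mul_X_add_C (p : Polynomial ℚ) (r : ℚ) :
    (p * (X + C r)).coeff 0 = p.coeff 0 * r := by
  simp [mul_coeff_zero]

lemma coeff_zero_mul_X_sub_C (p : Polynomial ℚ) (r : ℚ) :
    (p * (X - C r)).coeff 0 = -(p.coeff 0 * r) := by
  simp [mul_coeff_zero]

lemma feldQ_coeff_nonneg (ν : ℕ) : ∀ j, 0 ≤ (feldQ ν).coeff j := by
  induction ν with
  | zero => intro j; rw [feldQ]; simp [coeff_one]; positivity
  | succ ν ih =>
    intro j
    rw [feldQ_succ]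
    cases j with
    | zero =>
      rw [coeff_zero_mul_X_add_C]
      exact mul_nonneg (ih 0) (by positivity)
    | succ a =>
      rw [coeff_mul_X_add_C]
      exact add_nonneg (ih a) (mul_nonneg (ih (a + 1)) (by positivity))

lemma feldP_coeff (ν : ℕ) : ∀ j,
    (∏ i ∈ Finset.range ν, (X - C (i : ℚ))).coeff j = (-1) ^ (ν + j) * (feldQ ν).coeff j := by
  induction ν with
  | zero =>
    intro j
    rw [feldQ]
    cases j with
    | zero => simp
    | succ a => simp [coeff_one]
  | succ ν ih =>
    intro j
    rw [feldP_succ, feldQ_succ]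
    cases j with
    | zero =>
      rw [coeff_zero_mul_X_sub_C, coeff_zero_mul_X_add_C, ih 0]
      ring
    | succ a =>
      rw [coeff_mul_X_sub_C, coeff_mul_X_add_C, ih a, ih (a + 1)]
      ring

lemma feldP_abs_coeff (ν j : ℕ) :
    |(∏ i ∈ Finset.range ν, (X - C (i : ℚ))).coeff j| = (feldQ ν).coeff j := by
  rw [feldP_coeff, abs_mul, abs_pow, abs_neg, abs_one, one_pow, one_mul,
    abs_of_nonneg (feldQ_coeff_nonneg ν j)]

lemma feldQ_natDegree (ν : ℕ) : (feldQ ν).natDegree = ν := by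
  have h : ∀ i ∈ Finset.range ν, (X + C (i : ℚ)).natDegree = 1 := fun i _ => natDegree_X_add_C _
  rw [feldQ, natDegree_prod_of_monic _ _ (fun i _ => monic_X_add_C _), Finset.sum_congr rfl h]
  simp

lemma feldQ_sum_le (ν : ℕ) :
    ∑ j ∈ Finset.range (ν + 1), (j.factorial : ℚ) * (feldQ ν).coeff j
      ≤ 2 ^ ν * ν.factorial := by
  induction ν with
  | zero => rw [feldQ]; simp
  | succ ν ih =>
    have hQ0 : (feldQ (ν + 1)).coeff 0 = (feldQ ν).coeff 0 * ν := by
      rw [feldQ_succ, coeff_zero_mul_X_add_C]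
    have hQs : ∀ a, (feldQ (ν + 1)).coeff (a + 1)
        = (feldQ ν).coeff a + (feldQ ν).coeff (a + 1) * ν := by
      intro a; rw [feldQ_succ, coeff_mul_X_add_C]
    have htop : (feldQ ν).coeff (ν + 1) = 0 :=
      coeff_eq_zero_of_natDegree_lt (by rw [feldQ_natDegree]; omega)
    have key : ∑ j ∈ Finset.range (ν + 2), (j.factorial : ℚ) * (feldQ (ν + 1)).coeff j
        = (∑ j ∈ Finset.range (ν + 1), ((j + 1).factorial : ℚ) * (feldQ ν).coeff j)
          + ν * ∑ j ∈ Finset.range (ν + 2), (j.factorial : ℚ) * (feldQ ν).coeff j := by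
      rw [Finset.sum_range_succ' _ (ν + 1), Finset.sum_range_succ' _ (ν + 1)]
      simp only [hQ0, hQs]
      have e1 : ∀ j ∈ Finset.range (ν + 1),
          ((j + 1).factorial : ℚ) * ((feldQ ν).coeff j + (feldQ ν).coeff (j + 1) * ν)
            = ((j + 1).factorial : ℚ) * (feldQ ν).coeff j
              + (ν : ℚ) * (((j + 1).factorial : ℚ) * (feldQ ν).coeff (j + 1)) :=
        fun j _ => by ring
      rw [Finset.sum_congr rfl e1, Finset.sum_add_distrib, ← Finset.mul_sum]
      push_cast
      ring
    rw [key]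
    have h1 : ∑ j ∈ Finset.range (ν + 1), ((j + 1).factorial : ℚ) * (feldQ ν).coeff j
        ≤ (ν + 1) * ∑ j ∈ Finset.range (ν + 1), (j.factorial : ℚ) * (feldQ ν).coeff j := by
      rw [Finset.mul_sum]
      apply Finset.sum_le_sum
      intro j hj
      rw [Finset.mem_range] at hj
      have : ((j + 1).factorial : ℚ) = (j + 1) * j.factorial := by
        rw [Nat.factorial_succ]; push_cast; ring
      rw [this, ← mul_assoc]
      apply mul_le_mul_of_nonneg_right _ (feldQ_coeff_nonneg ν j)
      apply mul_le_mul_of_nonneg_right _ (by positivity)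
      have hje : (j : ℚ) ≤ ν := by exact_mod_cast Nat.lt_succ_iff.mp hj
      linarith
    have h2 : ∑ j ∈ Finset.range (ν + 2), (j.factorial : ℚ) * (feldQ ν).coeff j
        = ∑ j ∈ Finset.range (ν + 1), (j.factorial : ℚ) * (feldQ ν).coeff j := by
      rw [Finset.sum_range_succ, htop]; ring
    have hT0 : 0 ≤ ∑ j ∈ Finset.range (ν + 1), (j.factorial : ℚ) * (feldQ ν).coeff j :=
      Finset.sum_nonneg fun j _ => mul_nonneg (by positivity) (feldQ_coeff_nonneg ν j)
    rw [h2]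
    calc (∑ j ∈ Finset.range (ν + 1), ((j + 1).factorial : ℚ) * (feldQ ν).coeff j)
          + ν * ∑ j ∈ Finset.range (ν + 1), (j.factorial : ℚ) * (feldQ ν).coeff j
        ≤ (ν + 1) * (∑ j ∈ Finset.range (ν + 1), (j.factorial : ℚ) * (feldQ ν).coeff j)
          + ν * ∑ j ∈ Finset.range (ν + 1), (j.factorial : ℚ) * (feldQ ν).coeff j :=
          add_le_add h1 le_rfl
      _ = (2 * ν + 1) * ∑ j ∈ Finset.range (ν + 1), (j.factorial : ℚ) * (feldQ ν).coeff j := by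
          ring
      _ ≤ (2 * (ν + 1)) * ∑ j ∈ Finset.range (ν + 1), (j.factorial : ℚ) * (feldQ ν).coeff j := by
          apply mul_le_mul_of_nonneg_right _ hT0
          push_cast; linarith
      _ ≤ (2 * (ν + 1)) * (2 ^ ν * ν.factorial) :=
          mul_le_mul_of_nonneg_left ih (by positivity)
      _ = 2 ^ (ν + 1) * (ν + 1).factorial := by
          rw [Nat.factorial_succ]; push_cast; ring

theorem stmt4 (ν : ℕ) :
    ∑ j ∈ Finset.range (ν + 1), (j.factorial : ℚ) * |(feldman ν).coeff j| ≤ 2 ^ ν := by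
  have hfac : (0 : ℚ) < ν.factorial := by positivity
  have habs : ∀ j, |(feldman ν).coeff j| = (ν.factorial : ℚ)⁻¹ * (feldQ ν).coeff j := by
    intro j
    rw [feldman, coeff_smul, smul_eq_mul, abs_mul, abs_of_nonneg (by positivity),
      feldP_abs_coeff]
  calc ∑ j ∈ Finset.range (ν + 1), (j.factorial : ℚ) * |(feldman ν).coeff j|
      = (ν.factorial : ℚ)⁻¹ * ∑ j ∈ Finset.range (ν + 1), (j.factorial : ℚ) * (feldQ ν).coeff j := by
        rw [Finset.mul_sum]; apply Finset.sum_congr rfl; intro j _; rw [habs]; ring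
    _ ≤ (ν.factorial : ℚ)⁻¹ * (2 ^ ν * ν.factorial) := by
        apply mul_le_mul_of_nonneg_left (feldQ_sum_le ν) (by positivity)
    _ = 2 ^ ν := by field_simp
end

section
/- Let k and ν be natural numbers. For every integer ℓ and every integer u with 0 ≤ u ≤ k, the number d_ν^k · ℱ_ν^{(u)}(ℓ) is an integer, where ℱ_ν^{(u)} denotes the u-th derivative of the Fel'dman polynomial ℱ_ν. -/
open Polynomial

/-- `d_n = lcm(1, …, n)` (with `d_0 = 1`). -/
def dlcm (n : ℕ) : ℕ := (Finset.Icc 1 n).lcm id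

lemma dlcm_succ (n : ℕ) : dlcm (n + 1) = lcm (n + 1) (dlcm n) := by
  have h : Finset.Icc 1 (n + 1) = insert (n + 1) (Finset.Icc 1 n) := by
    ext x; simp only [Finset.mem_Icc, Finset.mem_insert]; omega
  rw [dlcm, h, Finset.lcm_insert]; rfl

lemma dlcm_ne_zero (n : ℕ) : dlcm n ≠ 0 := by
  induction n with
  | zero => simp [dlcm]
  | succ n ih =>
    rw [dlcm_succ]
    intro h
    rcases (lcm_eq_zero_iff _ _).1 h with h | h
    · omega
    · exact ih h

lemma dvd_dlcm {m n : ℕ} (h1 : 1 ≤ m) (h2 : m ≤ n) : m ∣ dlcm n :=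
  Finset.dvd_lcm (by simp only [Finset.mem_Icc]; omega)

lemma dlcm_dvd_succ (n : ℕ) : dlcm n ∣ dlcm (n + 1) := by
  rw [dlcm_succ]; exact dvd_lcm_right _ _

lemma iter_deriv_add (p q : ℚ[X]) (u : ℕ) :
    derivative^[u] (p + q) = derivative^[u] p + derivative^[u] q := by
  induction u generalizing p q with
  | zero => rfl
  | succ n ih => simp [Function.iterate_succ_apply, derivative_add, ih]

lemma iter_deriv_comp (p q : ℚ[X]) (hq : derivative q = 1) (u : ℕ) :
    derivative^[u] (p.comp q) = (derivative^[u] p).comp q := by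
  induction u generalizing p with
  | zero => rfl
  | succ n ih =>
    rw [Function.iterate_succ_apply, Function.iterate_succ_apply, derivative_comp, hq, one_mul,
      ih]

lemma iter_deriv_X_mul (q : ℚ[X]) (w : ℕ) :
    derivative^[w + 1] (X * q) =
      X * derivative^[w + 1] q + C ((w : ℚ) + 1) * derivative^[w] q := by
  induction w generalizing q with
  | zero => simp [derivative_mul]; ring
  | succ n ih =>
    have hC : C (((n : ℚ) + 1) + 1) = C ((n : ℚ) + 1) + C 1 := by rw [← C_add]
    have hc : (((n + 1 : ℕ) : ℚ)) + 1 = ((n : ℚ) + 1) + 1 := by push_cast; ring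
    rw [Function.iterate_succ_apply' _ (n + 1) (X * q), ih,
      derivative_add, derivative_mul, derivative_mul, derivative_X, derivative_C,
      ← Function.iterate_succ_apply' derivative (n + 1) q,
      ← Function.iterate_succ_apply' derivative n q, hc, hC, C_1]
    ring

lemma feldman_succ (ν : ℕ) :
    feldman (ν + 1) = ((ν : ℚ) + 1)⁻¹ • (X * (feldman ν).comp (X - C 1)) := by
  have hfac : ((ν + 1).factorial : ℚ) = ((ν : ℚ) + 1) * (ν.factorial : ℚ) := by
    rw [Nat.factorial_succ]; push_cast; ring
  have h1 : ((ν : ℚ) + 1) ≠ 0 := by positivity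
  have h2 : ((ν.factorial : ℚ)) ≠ 0 := by
    exact_mod_cast Nat.factorial_ne_zero ν
  apply Polynomial.funext; intro x
  simp only [feldman, smul_eq_C_mul, eval_mul, eval_C, eval_comp, eval_sub, eval_X, eval_add,
    eval_prod, eval_one, hfac]
  have e1 : (∏ i ∈ Finset.range (ν + 1), (x - ((i : ℕ) : ℚ))) =
      x * ∏ i ∈ Finset.range ν, (x - 1 - ((i : ℕ) : ℚ)) := by
    rw [Finset.prod_range_succ']
    have h3 : (∏ i ∈ Finset.range ν, (x - ((i + 1 : ℕ) : ℚ))) =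
        ∏ i ∈ Finset.range ν, (x - 1 - ((i : ℕ) : ℚ)) :=
      Finset.prod_congr rfl fun i _ => by push_cast; ring
    rw [h3]
    push_cast
    ring
  rw [e1]
  field_simp

lemma feldman_pascal (ν : ℕ) :
    (feldman (ν + 1)).comp (X + C 1) = feldman (ν + 1) + feldman ν := by
  have hfac : ((ν + 1).factorial : ℚ) = ((ν : ℚ) + 1) * (ν.factorial : ℚ) := by
    rw [Nat.factorial_succ]; push_cast; ring
  have h1 : ((ν : ℚ) + 1) ≠ 0 := by positivity
  have h2 : ((ν.factorial : ℚ)) ≠ 0 := by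
    exact_mod_cast Nat.factorial_ne_zero ν
  apply Polynomial.funext; intro x
  simp only [feldman, smul_eq_C_mul, eval_mul, eval_add, eval_C, eval_comp, eval_sub, eval_X,
    eval_prod, eval_one, hfac]
  have e1 : (∏ i ∈ Finset.range (ν + 1), (x + 1 - ((i : ℕ) : ℚ))) =
      (x + 1) * ∏ i ∈ Finset.range ν, (x - ((i : ℕ) : ℚ)) := by
    rw [Finset.prod_range_succ']
    have h3 : (∏ i ∈ Finset.range ν, (x + 1 - ((i + 1 : ℕ) : ℚ))) =
        ∏ i ∈ Finset.range ν, (x - ((i : ℕ) : ℚ)) :=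
      Finset.prod_congr rfl fun i _ => by push_cast; ring
    rw [h3]
    push_cast
    ring
  have e2 : (∏ i ∈ Finset.range (ν + 1), (x - ((i : ℕ) : ℚ))) =
      (∏ i ∈ Finset.range ν, (x - ((i : ℕ) : ℚ))) * (x - (ν : ℚ)) := by
    rw [Finset.prod_range_succ]
  rw [e1, e2]
  field_simp
  ring

lemma feldman_succ_eval_zero (ν : ℕ) : (feldman (ν + 1)).eval 0 = 0 := by
  rw [feldman, smul_eq_C_mul, eval_mul, eval_prod]
  rw [Finset.prod_eq_zero (Finset.mem_range.2 (Nat.succ_pos ν)) (by simp)]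
  simp

lemma main_lemma : ∀ ν k u : ℕ, u ≤ k → ∀ ℓ : ℤ,
    ∃ z : ℤ, ((dlcm ν : ℚ)) ^ k * (derivative^[u] (feldman ν)).eval (ℓ : ℚ) = (z : ℚ) := by
  intro ν
  induction ν with
  | zero =>
    intro k u hu ℓ
    have hf : feldman 0 = 1 := by simp [feldman]
    cases u with
    | zero =>
      refine ⟨(dlcm 0 : ℤ) ^ k, ?_⟩
      simp [hf]
    | succ w =>
      rw [hf, iterate_derivative_one (Nat.succ_pos w)]
      exact ⟨0, by simp⟩
  | succ ν ih =>
    intro k u hu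
    obtain ⟨b, hb⟩ : dlcm ν ∣ dlcm (ν + 1) := dlcm_dvd_succ ν
    -- any integer multiple of (dlcm ν)^k value is also handled for dlcm (ν+1)
    have hsmall : ∀ x : ℤ, ∃ z : ℤ,
        ((dlcm (ν + 1) : ℚ)) ^ k * (derivative^[u] (feldman ν)).eval (x : ℚ) = (z : ℚ) := by
      intro x
      obtain ⟨z, hz⟩ := ih k u hu x
      refine ⟨b ^ k * z, ?_⟩
      rw [hb]; push_cast
      rw [← hz]; ring
    -- base case at ℓ = 0
    have base : ∃ z : ℤ,
        ((dlcm (ν + 1) : ℚ)) ^ k * (derivative^[u] (feldman (ν + 1))).eval ((0 : ℤ) : ℚ)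
          = (z : ℚ) := by
      cases u with
      | zero =>
        refine ⟨0, ?_⟩
        simp [feldman_succ_eval_zero]
      | succ w =>
        have hk : ∃ m, k = m + 1 := ⟨k - 1, by omega⟩
        obtain ⟨m, rfl⟩ := hk
        obtain ⟨a, ha⟩ : (ν + 1) ∣ dlcm (ν + 1) := dvd_dlcm (by omega) le_rfl
        obtain ⟨z, hz⟩ := ih m w (by omega) (-1)
        have hD : derivative^[w + 1] (feldman (ν + 1)) =
            ((ν : ℚ) + 1)⁻¹ • (X * (derivative^[w + 1] (feldman ν)).comp (X - C 1)
              + C ((w : ℚ) + 1) * (derivative^[w] (feldman ν)).comp (X - C 1)) := by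
          rw [feldman_succ, iterate_derivative_smul, iter_deriv_X_mul,
            iter_deriv_comp _ _ (by simp), iter_deriv_comp _ _ (by simp)]
        have hF : (derivative^[w + 1] (feldman (ν + 1))).eval 0 =
            ((ν : ℚ) + 1)⁻¹ * (((w : ℚ) + 1) * (derivative^[w] (feldman ν)).eval (-1)) := by
          rw [hD, smul_eq_C_mul]
          simp [eval_comp]
        have hz' : ((-1 : ℤ) : ℚ) = (-1 : ℚ) := by norm_num
        rw [hz'] at hz
        refine ⟨a * (w + 1) * b ^ m * z, ?_⟩
        push_cast
        rw [hF]
        have hne : ((ν : ℚ) + 1) ≠ 0 := by positivity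
        have hd : ((dlcm (ν + 1) : ℚ)) = ((ν : ℚ) + 1) * a := by
          rw [ha]; push_cast; ring
        have hd2 : ((dlcm (ν + 1) : ℚ)) ^ m = (dlcm ν : ℚ) ^ m * (b : ℚ) ^ m := by
          rw [hb]; push_cast; rw [mul_pow]
        calc ((dlcm (ν + 1) : ℚ)) ^ (m + 1) *
              (((ν : ℚ) + 1)⁻¹ * (((w : ℚ) + 1) * (derivative^[w] (feldman ν)).eval (-1)))
            = (((ν : ℚ) + 1)⁻¹ * ((ν : ℚ) + 1)) * (a : ℚ) * ((w : ℚ) + 1) * (b : ℚ) ^ m *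
              ((dlcm ν : ℚ) ^ m * (derivative^[w] (feldman ν)).eval (-1)) := by
              rw [pow_succ, hd2, hd]; ring
          _ = (a : ℚ) * ((w : ℚ) + 1) * (b : ℚ) ^ m * z := by
              rw [inv_mul_cancel₀ hne, hz]; ring
          _ = _ := by ring
    -- the step identity
    have step : ∀ x : ℚ, (derivative^[u] (feldman (ν + 1))).eval (x + 1) =
        (derivative^[u] (feldman (ν + 1))).eval x + (derivative^[u] (feldman ν)).eval x := by
      intro x
      have h := congrArg (fun p => (derivative^[u] p).eval x) (feldman_pascal ν)
      rw [iter_deriv_comp _ _ (by simp), eval_comp, iter_deriv_add] at h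
      simpa using h
    intro ℓ
    induction ℓ using Int.induction_on with
    | zero => exact base
    | succ n ihn =>
      obtain ⟨z1, h1⟩ := ihn
      obtain ⟨z2, h2⟩ := hsmall n
      refine ⟨z1 + z2, ?_⟩
      have hc : (((n : ℤ) + 1 : ℤ) : ℚ) = (n : ℚ) + 1 := by push_cast; ring
      rw [hc, step, mul_add]
      push_cast at h1 h2 ⊢
      rw [h1, h2]
    | pred n ihn =>
      obtain ⟨z1, h1⟩ := ihn
      obtain ⟨z2, h2⟩ := hsmall (-(n : ℤ) - 1)
      refine ⟨z1 - z2, ?_⟩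
      have hc1 : ((-(n : ℤ) : ℤ) : ℚ) = -(n : ℚ) := by push_cast; ring
      have hc2 : ((-(n : ℤ) - 1 : ℤ) : ℚ) = -(n : ℚ) - 1 := by push_cast; ring
      rw [hc1] at h1
      rw [hc2] at h2
      have hstep := step (-(n : ℚ) - 1)
      rw [show (-(n : ℚ) - 1) + 1 = -(n : ℚ) by ring] at hstep
      rw [hc2]
      have he : (derivative^[u] (feldman (ν + 1))).eval (-(n : ℚ) - 1) =
          (derivative^[u] (feldman (ν + 1))).eval (-(n : ℚ))
            - (derivative^[u] (feldman ν)).eval (-(n : ℚ) - 1) := by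
        rw [hstep]; ring
      rw [he, mul_sub, h1, h2]
      push_cast
      ring

theorem stmt5 (k ν : ℕ) (ℓ : ℤ) (u : ℕ) (hu : u ≤ k) :
    ∃ z : ℤ, ((dlcm ν : ℚ)) ^ k * (derivative^[u] (feldman ν)).eval (ℓ : ℚ) = (z : ℚ) := by
  exact main_lemma ν k u hu ℓ
end

section
/- Let m ≥ 1 be an integer, x₀, …, x_m pairwise distinct complex numbers, and n₀, …, n_m positive integers; set σ = n₀ + ⋯ + n_m. Let C₀ be the circle centered at 0 whose radius is strictly smaller than the minimal distance between two of the x_j, and C_∞ a circle centered at 0 containing all the points x₀, …, x_m in its interior. For 0 ≤ ℓ ≤ m define P_ℓ(z) = (1/2πi) ∮_{C₀} e^{zζ}/∏_{j=0}^{m} (ζ + x_ℓ − x_j)^{n_j} dζ and R(z) = (1/2πi) ∮_{C_∞} e^{zζ}/∏_{j=0}^{m} (ζ − x_j)^{n_j} dζ. Then: (1) each P_ℓ is a polynomial of degree exactly n_ℓ − 1; (2) R(z) = Σ_{ℓ=0}^{m} P_ℓ(z)·e^{x_ℓ z} for all z ∈ ℂ; (3) R vanishes at 0 to order at least σ − 1.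 -/
open Complex Metric Finset Polynomial intervalIntegral
open Complex Metric Finset Polynomial

lemma circleIntegral_finset_sum {ι : Type*} (s : Finset ι) (c : ℂ) (R : ℝ)
    (f : ι → ℂ → ℂ) (hf : ∀ i ∈ s, CircleIntegrable (f i) c R) :
    (∮ ζ in C(c, R), ∑ i ∈ s, f i ζ) = ∑ i ∈ s, ∮ ζ in C(c, R), f i ζ := by
  simp only [circleIntegral]
  rw [← intervalIntegral.integral_finset_sum]
  · congr 1; ext θ; rw [Finset.smul_sum]
  · intro i hi
    exact ((circleIntegrable_iff R).mp (hf i hi))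

lemma circleIntegrable_mul_exp_div_pow (b z a c : ℂ) (R : ℝ) (k : ℕ)
    (ha : ∀ ζ ∈ sphere c |R|, ζ ≠ a) :
    CircleIntegrable (fun ζ => b * (Complex.exp (z * ζ) / (ζ - a) ^ k)) c R := by
  apply ContinuousOn.circleIntegrable'
  exact continuousOn_const.mul
    ((Complex.continuous_exp.comp (continuous_const.mul continuous_id)).continuousOn.div
    (((continuous_id.sub continuous_const).pow k).continuousOn)
    (fun ζ hζ => pow_ne_zero _ (sub_ne_zero_of_ne (ha ζ hζ))))

lemma circleIntegrable_exp_div_pow (z a c : ℂ) (R : ℝ) (k : ℕ)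
    (ha : ∀ ζ ∈ sphere c |R|, ζ ≠ a) :
    CircleIntegrable (fun ζ => Complex.exp (z * ζ) / (ζ - a) ^ k) c R := by
  simpa using circleIntegrable_mul_exp_div_pow 1 z a c R k ha

/-- Integration by parts step. -/
lemma circleIntegral_exp_div_pow_step (z a c : ℂ) (R : ℝ) (hR : 0 ≤ R) (k : ℕ) (hk : 1 ≤ k)
    (ha : ∀ ζ ∈ sphere c R, ζ ≠ a) :
    (k : ℂ) * (∮ ζ in C(c, R), Complex.exp (z * ζ) / (ζ - a) ^ (k + 1)) =
      z * ∮ ζ in C(c, R), Complex.exp (z * ζ) / (ζ - a) ^ k := by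
  have ha' : ∀ ζ ∈ sphere c |R|, ζ ≠ a := by rwa [_root_.abs_of_nonneg hR]
  have hint1 := circleIntegrable_mul_exp_div_pow z z a c R k ha'
  have hint2 := circleIntegrable_mul_exp_div_pow (k : ℂ) z a c R (k + 1) ha'
  have key : (∮ ζ in C(c, R), (z * (Complex.exp (z * ζ) / (ζ - a) ^ k)
      - (k : ℂ) * (Complex.exp (z * ζ) / (ζ - a) ^ (k + 1)))) = 0 := by
    apply circleIntegral.integral_eq_zero_of_hasDerivWithinAt (f := fun ζ =>
      Complex.exp (z * ζ) * (ζ - a) ^ (-(k : ℤ))) hR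
    intro ζ hζ
    have hza : ζ - a ≠ 0 := sub_ne_zero_of_ne (ha ζ hζ)
    have h1 : HasDerivAt (fun ζ : ℂ => Complex.exp (z * ζ)) (Complex.exp (z * ζ) * z) ζ := by
      simpa using ((hasDerivAt_id ζ).const_mul z).cexp
    have h2 : HasDerivAt (fun ζ : ℂ => (ζ - a) ^ (-(k : ℤ)))
        ((-(k : ℤ)) * (ζ - a) ^ (-(k : ℤ) - 1)) ζ := by
      have h := ((hasDerivAt_zpow (-(k : ℤ)) (ζ - a) (Or.inl hza)).comp ζ
        ((hasDerivAt_id ζ).sub_const a))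
      simpa only [Function.comp_def, id, mul_one, Int.cast_neg, Int.cast_natCast] using h
    have := h1.mul h2
    apply HasDerivAt.hasDerivWithinAt
    refine this.congr_deriv ?_
    have e1 : (ζ - a) ^ (-(k : ℤ)) = ((ζ - a) ^ k)⁻¹ := by
      rw [zpow_neg, zpow_natCast]
    have e2 : (ζ - a) ^ (-(k : ℤ) - 1) = ((ζ - a) ^ (k + 1))⁻¹ := by
      rw [show (-(k : ℤ) - 1) = -((k+1 : ℕ) : ℤ) by push_cast; ring, zpow_neg, zpow_natCast]
    rw [e1, e2]
    field_simp
    push_cast; ring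
  rw [circleIntegral.integral_sub hint1 hint2, circleIntegral.integral_const_mul,
    circleIntegral.integral_const_mul, sub_eq_zero] at key
  exact key.symm

/-- Cauchy formula with higher order pole, pole inside. -/
lemma circleIntegral_exp_div_pow_inside (z a : ℂ) (R : ℝ) (hR : 0 < R)
    (ha : ‖a‖ < R) (k : ℕ) :
    (∮ ζ in C(0, R), Complex.exp (z * ζ) / (ζ - a) ^ (k + 1)) =
      (2 * Real.pi * Complex.I) * (z ^ k / (Nat.factorial k)) * Complex.exp (z * a) := by
  induction k with
  | zero =>
      have hd : DifferentiableOn ℂ (fun ζ => Complex.exp (z * ζ)) (closedBall (0 : ℂ) R) :=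
        (Complex.differentiable_exp.comp ((differentiable_id).const_mul z)).differentiableOn
      have hw : a ∈ ball (0 : ℂ) R := by simpa [Complex.dist_eq] using ha
      have := hd.circleIntegral_sub_inv_smul hw
      simp only [smul_eq_mul] at this
      calc (∮ ζ in C(0, R), Complex.exp (z * ζ) / (ζ - a) ^ (0 + 1))
          = ∮ ζ in C(0, R), (ζ - a)⁻¹ * Complex.exp (z * ζ) := by
            apply circleIntegral.integral_congr hR.le
            intro ζ _; simp [div_eq_inv_mul]
        _ = (2 * Real.pi * Complex.I) * (z ^ 0 / (Nat.factorial 0)) * Complex.exp (z * a) := by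
            rw [this]; simp
  | succ k ih =>
      have ha' : ∀ ζ ∈ sphere (0 : ℂ) R, ζ ≠ a := by
        intro ζ hζ h
        rw [mem_sphere_iff_norm, sub_zero, h] at hζ
        exact absurd hζ (by simpa using ha.ne)
      have step := circleIntegral_exp_div_pow_step z a 0 R hR.le (k + 1) (by omega) ha'
      rw [ih] at step
      have hk1 : ((k : ℂ) + 1) ≠ 0 := by
        exact_mod_cast Nat.cast_add_one_ne_zero (R := ℂ) k
      have hfac : (((k+1).factorial : ℂ)) = ((k:ℂ)+1) * (k.factorial : ℂ) := by
        rw [Nat.factorial_succ]; push_cast; ring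
      have hf0 : ((k.factorial : ℂ)) ≠ 0 := by exact_mod_cast k.factorial_ne_zero
      apply mul_left_cancel₀ hk1
      push_cast at step
      rw [step, hfac]
      field_simp
      ring

/-- Pole outside: integral vanishes. -/
lemma circleIntegral_exp_div_pow_outside (z a : ℂ) (R : ℝ) (hR : 0 ≤ R)
    (ha : R < ‖a‖) (k : ℕ) :
    (∮ ζ in C(0, R), Complex.exp (z * ζ) / (ζ - a) ^ (k + 1)) = 0 := by
  have ha' : ∀ ζ ∈ sphere (0 : ℂ) R, ζ ≠ a := by
    intro ζ hζ h
    rw [mem_sphere_iff_norm, sub_zero, h] at hζ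
    exact absurd hζ (by simpa using ha.ne')
  induction k with
  | zero =>
      apply Complex.circleIntegral_eq_zero_of_differentiable_on_off_countable hR
        (Set.countable_empty)
      · apply ContinuousOn.div
        · exact (Complex.continuous_exp.comp (continuous_const.mul continuous_id)).continuousOn
        · exact ((continuous_id.sub continuous_const).pow 1).continuousOn
        · intro ζ hζ
          apply pow_ne_zero
          apply sub_ne_zero_of_ne
          rintro rfl
          exact absurd (mem_closedBall_zero_iff.mp hζ) (by simpa using ha.not_ge)
      · intro ζ hζ
        apply DifferentiableAt.div
        · exact (Complex.differentiable_exp.comp ((differentiable_id).const_mul z)).differentiableAt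
        · exact (differentiable_id.sub_const a).pow 1 |>.differentiableAt
        · apply pow_ne_zero
          apply sub_ne_zero_of_ne
          rintro rfl
          exact absurd (mem_ball_zero_iff.mp hζ.1).le (by simpa using ha.not_ge)
  | succ k ih =>
      have step := circleIntegral_exp_div_pow_step z a 0 R hR (k + 1) (by omega) ha'
      rw [ih] at step
      rw [mul_zero] at step
      have hk1 : (((k+1 : ℕ)) : ℂ) ≠ 0 := by exact_mod_cast (Nat.succ_ne_zero k)
      exact (mul_eq_zero.mp step).resolve_left hk1
open Complex Metric Finset Polynomial

lemma circleIntegral_pow_mul_inv_prod_eq_zero {m : ℕ} (x : Fin (m+1) → ℂ)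
    (n : Fin (m+1) → ℕ) (Rinf : ℝ) (hRinf : ∀ j, ‖x j‖ < Rinf)
    (t : ℕ) (ht : t + 2 ≤ ∑ j, n j) :
    (∮ ζ in C(0, Rinf), ζ ^ t * (∏ j, (ζ - x j) ^ (n j))⁻¹) = 0 := by
  set σ' := ∑ j, n j with hσ'
  set f : ℂ → ℂ := fun ζ => ζ ^ t * (∏ j, (ζ - x j) ^ (n j))⁻¹ with hf
  have hR0 : 0 < Rinf := (norm_nonneg (x 0)).trans_lt (hRinf 0)
  -- the integral is independent of the radius
  have hne : ∀ (ζ : ℂ), Rinf ≤ ‖ζ‖ → (∏ j, (ζ - x j) ^ (n j)) ≠ 0 := by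
    intro ζ hζ
    apply Finset.prod_ne_zero_iff.mpr
    intro j _
    apply pow_ne_zero
    apply sub_ne_zero_of_ne
    rintro rfl
    exact absurd ((hRinf j).trans_le hζ) (lt_irrefl _)
  have hstep : ∀ R, Rinf ≤ R → (∮ ζ in C(0, R), f ζ) = (∮ ζ in C(0, Rinf), f ζ) := by
    intro R hR
    apply Complex.circleIntegral_eq_of_differentiable_on_annulus_off_countable hR0 hR
      Set.countable_empty
    · apply ContinuousOn.mul (continuous_pow t).continuousOn
      apply ContinuousOn.inv₀
      · exact (continuousOn_finset_prod _ (fun j _ =>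
          ((continuous_id.sub continuous_const).pow (n j)).continuousOn))
      · intro ζ hζ
        refine hne ζ ?_
        simpa [Complex.dist_eq] using hζ.2
    · intro ζ hζ
      apply DifferentiableAt.mul (differentiableAt_pow t)
      apply DifferentiableAt.inv
      · exact DifferentiableAt.fun_finsetProd (fun j _ =>
          (differentiable_id.sub_const (x j)).pow (n j) |>.differentiableAt)
      · refine hne ζ ?_
        have := hζ.1.2
        simp only [mem_closedBall, Complex.dist_eq, not_le, sub_zero] at this
        exact this.le
  -- bound for large R
  have hbound : ∀ R, 2 * Rinf ≤ R → 1 ≤ R →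
      ‖∮ ζ in C(0, Rinf), f ζ‖ ≤ 2 * Real.pi * 2 ^ σ' / R := by
    intro R h2R h1R
    have hRpos : (0:ℝ) < R := lt_of_lt_of_le one_pos h1R
    have hRR : Rinf ≤ R := by linarith
    rw [← hstep R hRR]
    have hC : ∀ ζ ∈ sphere (0:ℂ) R, ‖f ζ‖ ≤ R ^ t * ((R/2) ^ σ')⁻¹ := by
      intro ζ hζ
      have hζR : ‖ζ‖ = R := by simpa [Complex.dist_eq] using hζ
      have hlow : ∀ j, (R/2) ≤ ‖ζ - x j‖ := by
        intro j
        have h1 : ‖x j‖ ≤ R / 2 := by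
          have := hRinf j; linarith
        calc R/2 = R - R/2 := by ring
          _ ≤ ‖ζ‖ - ‖x j‖ := by
              rw [hζR]; linarith
          _ ≤ ‖ζ - x j‖ := by
              have := norm_sub_norm_le ζ (x j)
              linarith
      have hprod : (R/2) ^ σ' ≤ ‖∏ j, (ζ - x j) ^ (n j)‖ := by
        calc (R/2) ^ σ' = ∏ j, (R/2) ^ (n j) := by
              rw [hσ', Finset.prod_pow_eq_pow_sum]
          _ ≤ ∏ j, ‖ζ - x j‖ ^ (n j) :=
              Finset.prod_le_prod (fun j _ => by positivity)
                (fun j _ => pow_le_pow_left₀ (by positivity) (hlow j) _)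
          _ = ‖∏ j, (ζ - x j) ^ (n j)‖ := by
              rw [norm_prod]; simp [norm_pow]
      have hprodpos : (0:ℝ) < (R/2) ^ σ' := by positivity
      rw [hf]
      simp only [norm_mul, norm_pow, norm_inv]
      rw [hζR]
      exact mul_le_mul_of_nonneg_left
        (inv_anti₀ hprodpos hprod) (by positivity)
    have := circleIntegral.norm_integral_le_of_norm_le_const (f := f) (c := 0) (R := R)
      hRpos.le (C := R ^ t * ((R/2) ^ σ')⁻¹) hC
    refine this.trans ?_
    have hpow : R ^ (t+2) ≤ R ^ σ' := pow_le_pow_right₀ h1R ht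
    have heq : 2 * Real.pi * R * (R ^ t * ((R/2) ^ σ')⁻¹)
        = 2 * Real.pi * 2 ^ σ' * R ^ (t+1) / R ^ σ' := by
      rw [div_pow]
      have h2σ : ((2:ℝ)) ^ σ' ≠ 0 := by positivity
      have hRσ : R ^ σ' ≠ 0 := by positivity
      field_simp
      ring
    rw [heq, div_le_div_iff₀ (by positivity) hRpos]
    calc 2 * Real.pi * 2 ^ σ' * R ^ (t+1) * R = 2 * Real.pi * 2 ^ σ' * R ^ (t+2) := by
          rw [mul_assoc, ← pow_succ]
      _ ≤ 2 * Real.pi * 2 ^ σ' * R ^ σ' := by gcongr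
  -- conclude
  by_contra hI
  have hIpos : 0 < ‖∮ ζ in C(0, Rinf), f ζ‖ := norm_pos_iff.mpr hI
  set I := ‖∮ ζ in C(0, Rinf), f ζ‖
  set R := max (max (2 * Rinf) 1) (2 * Real.pi * 2 ^ σ' / I + 1) with hRdef
  have h1 : 2 * Rinf ≤ R := le_trans (le_max_left _ _) (le_max_left _ _)
  have h2 : 1 ≤ R := le_trans (le_max_right _ _) (le_max_left _ _)
  have h3 : 2 * Real.pi * 2 ^ σ' / I + 1 ≤ R := le_max_right _ _
  have hb := hbound R h1 h2
  have hRpos : (0:ℝ) < R := lt_of_lt_of_le one_pos h2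
  have h4 : I * R ≤ 2 * Real.pi * 2 ^ σ' := by
    rw [← le_div_iff₀ hRpos]; exact hb
  have h5 : 2 * Real.pi * 2 ^ σ' + I ≤ I * R := by
    have h6 := mul_le_mul_of_nonneg_left h3 hIpos.le
    rw [mul_add, mul_one, mul_div_cancel₀ _ (ne_of_gt hIpos)] at h6
    exact h6
  linarith
open Complex Metric Finset Polynomial intervalIntegral

lemma hasDerivAt_circleIntegral_exp (r : ℝ) (hr : 0 ≤ r) (g : ℂ → ℂ)
    (hg : ContinuousOn g (sphere (0:ℂ) r)) (t : ℕ) (z : ℂ) :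
    HasDerivAt (fun w => ∮ ζ in C(0, r), (ζ ^ t * Complex.exp (w * ζ) * g ζ))
      (∮ ζ in C(0, r), (ζ ^ (t+1) * Complex.exp (z * ζ) * g ζ)) z := by
  obtain ⟨M, hM⟩ := (isCompact_sphere (0:ℂ) r).exists_bound_of_continuousOn hg
  have hgc : Continuous fun θ : ℝ => g (circleMap 0 r θ) :=
    hg.comp_continuous (continuous_circleMap 0 r) (fun θ => circleMap_mem_sphere 0 hr θ)
  set F : ℂ → ℝ → ℂ := fun w θ => deriv (circleMap 0 r) θ •
    ((circleMap 0 r θ) ^ t * Complex.exp (w * circleMap 0 r θ) * g (circleMap 0 r θ)) with hF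
  set F' : ℂ → ℝ → ℂ := fun w θ => deriv (circleMap 0 r) θ •
    ((circleMap 0 r θ) ^ (t+1) * Complex.exp (w * circleMap 0 r θ) * g (circleMap 0 r θ)) with hF'
  have hcont : ∀ w : ℂ, Continuous (F w) := by
    intro w
    apply Continuous.fun_smul
    · rw [show deriv (circleMap 0 r) = fun θ => circleMap 0 r θ * Complex.I from
        funext fun θ => deriv_circleMap _ _ _]
      exact (continuous_circleMap 0 r).mul continuous_const
    · exact (((continuous_circleMap 0 r).pow t).mul
        (Complex.continuous_exp.comp (continuous_const.mul (continuous_circleMap 0 r)))).mul hgc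
  have hcont' : ∀ w : ℂ, Continuous (F' w) := by
    intro w
    apply Continuous.fun_smul
    · rw [show deriv (circleMap 0 r) = fun θ => circleMap 0 r θ * Complex.I from
        funext fun θ => deriv_circleMap _ _ _]
      exact (continuous_circleMap 0 r).mul continuous_const
    · exact (((continuous_circleMap 0 r).pow (t+1)).mul
        (Complex.continuous_exp.comp (continuous_const.mul (continuous_circleMap 0 r)))).mul hgc
  set bnd : ℝ → ℝ := fun _ => r * (r ^ (t+1) * (Real.exp ((‖z‖ + 1) * r) * max M 0))
  have key := intervalIntegral.hasDerivAt_integral_of_dominated_loc_of_deriv_le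
    (F := F) (F' := F') (x₀ := z) (a := 0) (b := 2 * Real.pi)
    (μ := MeasureTheory.volume) (bound := bnd) (s := ball z 1) (ball_mem_nhds z one_pos)
    (Filter.Eventually.of_forall fun w => (hcont w).aestronglyMeasurable)
    ((hcont z).intervalIntegrable _ _)
    ((hcont' z).aestronglyMeasurable)
    ?_ (intervalIntegrable_const) ?_
  · exact key.2
  · -- bound
    apply Filter.Eventually.of_forall
    intro θ _ w hw
    have h1 : ‖deriv (circleMap 0 r) θ‖ = r := by
      simp [deriv_circleMap, _root_.abs_of_nonneg hr]
    have h2 : ‖circleMap 0 r θ‖ = r := by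
      simp [_root_.abs_of_nonneg hr]
    have h3 : ‖Complex.exp (w * circleMap 0 r θ)‖ ≤ Real.exp ((‖z‖ + 1) * r) := by
      rw [Complex.norm_exp]
      apply Real.exp_le_exp.mpr
      calc (w * circleMap 0 r θ).re ≤ ‖w * circleMap 0 r θ‖ := Complex.re_le_norm _
        _ = ‖w‖ * r := by rw [norm_mul, h2]
        _ ≤ (‖z‖ + 1) * r := by
            apply mul_le_mul_of_nonneg_right _ hr
            have := mem_ball_iff_norm.mp hw
            have h4 := norm_sub_norm_le w z
            linarith
    have h5 : ‖g (circleMap 0 r θ)‖ ≤ max M 0 :=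
      le_trans (hM _ (circleMap_mem_sphere 0 hr θ)) (le_max_left _ _)
    simp only [hF', norm_smul, norm_mul, norm_pow, h2]
    rw [h1]
    apply mul_le_mul_of_nonneg_left _ hr
    calc r ^ (t+1) * ‖Complex.exp (w * circleMap 0 r θ)‖ * ‖g (circleMap 0 r θ)‖
        ≤ r ^ (t+1) * Real.exp ((‖z‖ + 1) * r) * max M 0 := by
          apply mul_le_mul (mul_le_mul_of_nonneg_left h3 (by positivity)) h5
            (norm_nonneg _) (by positivity)
      _ = r ^ (t+1) * (Real.exp ((‖z‖ + 1) * r) * max M 0) := by ring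
  · -- differentiability
    apply Filter.Eventually.of_forall
    intro θ _ w _
    have h : HasDerivAt (fun w : ℂ => Complex.exp (w * circleMap 0 r θ))
        (Complex.exp (w * circleMap 0 r θ) * circleMap 0 r θ) w := by
      simpa using ((hasDerivAt_id w).mul_const (circleMap 0 r θ)).cexp
    have h2 := ((h.const_mul ((circleMap 0 r θ) ^ t)).mul_const
        (g (circleMap 0 r θ))).const_mul (deriv (circleMap 0 r) θ)
    simp only [hF, hF', smul_eq_mul]
    refine h2.congr_deriv ?_
    ring

lemma iteratedDeriv_circleIntegral_exp (r : ℝ) (hr : 0 ≤ r) (g : ℂ → ℂ)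
    (hg : ContinuousOn g (sphere (0:ℂ) r)) (c : ℂ) (t : ℕ) (z : ℂ) :
    iteratedDeriv t (fun w => c * ∮ ζ in C(0, r), (Complex.exp (w * ζ) * g ζ)) z
      = c * ∮ ζ in C(0, r), (ζ ^ t * Complex.exp (z * ζ) * g ζ) := by
  induction t generalizing z with
  | zero => simp only [iteratedDeriv_zero, pow_zero, one_mul]
  | succ t ih =>
      rw [iteratedDeriv_succ]
      have hfun : iteratedDeriv t (fun w => c * ∮ ζ in C(0, r), (Complex.exp (w * ζ) * g ζ))
          = fun w => c * ∮ ζ in C(0, r), (ζ ^ t * Complex.exp (w * ζ) * g ζ) := funext ih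
      rw [hfun]
      exact (((hasDerivAt_circleIntegral_exp r hr g hg t z).const_mul c)).deriv
open Complex Metric Finset Polynomial

/-- Partial fraction decomposition of `1 / ∏ (ζ - x j)^(n j)`. -/
lemma partial_fractions {m : ℕ} (x : Fin (m+1) → ℂ) (hx : Function.Injective x)
    (n : Fin (m+1) → ℕ) (hn : ∀ j, 1 ≤ n j) :
    ∃ c : Fin (m+1) → ℕ → ℂ,
      (∀ ℓ, c ℓ (n ℓ - 1) = (∏ j ∈ Finset.univ.erase ℓ, (x ℓ - x j) ^ (n j))⁻¹) ∧
      (∀ ζ : ℂ, (∀ j, ζ ≠ x j) →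
        (∏ j, (ζ - x j) ^ (n j))⁻¹ =
          ∑ ℓ, ∑ k ∈ Finset.range (n ℓ), c ℓ k / (ζ - x ℓ) ^ (k + 1)) := by
  classical
  set g : Fin (m+1) → ℂ[X] := fun j => (X - C (x j)) ^ (n j) with hg
  have hgmonic : ∀ j ∈ Finset.univ (α := Fin (m+1)), (g j).Monic :=
    fun j _ => (monic_X_sub_C (x j)).pow (n j)
  have hcop : Set.Pairwise ↑(Finset.univ (α := Fin (m+1)))
      fun i j => IsCoprime (g i) (g j) := by
    intro i _ j _ hij
    exact (Polynomial.isCoprime_X_sub_C_of_isUnit_sub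
      (sub_ne_zero_of_ne (fun h => hij (hx h))).isUnit).pow
  obtain ⟨q, r, hdeg, hid⟩ := div_prod_eq_quo_add_sum_rem_div (K := RatFunc ℂ) 1 hgmonic hcop
  set φ := algebraMap ℂ[X] (RatFunc ℂ) with hφ
  have hginj : Function.Injective φ := IsFractionRing.injective _ _
  have hg0 : ∀ j, φ (g j) ≠ 0 := by
    intro j h
    exact (hgmonic j (Finset.mem_univ j)).ne_zero (by simpa using hginj (by simpa using h))
  have hprodK : (∏ j, φ (g j)) ≠ 0 := Finset.prod_ne_zero_iff.mpr (fun j _ => hg0 j)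
  have hdegg : ∀ j, (g j).degree = (n j : WithBot ℕ) := by
    intro j
    rw [hg]
    simp [degree_pow, degree_X_sub_C]
  -- polynomial identity
  have hpoly : q * ∏ j, g j + ∑ ℓ, r ℓ * ∏ j ∈ Finset.univ.erase ℓ, g j = 1 := by
    apply hginj
    rw [map_add, map_mul, map_prod, map_sum, map_one]
    have hid' : φ 1 / ∏ i, φ (g i) = φ q + ∑ i, φ (r i) / φ (g i) := hid
    have h2 := congrArg (· * ∏ j, φ (g j)) hid'
    simp only at h2
    rw [div_mul_cancel₀ _ hprodK, map_one, add_mul, Finset.sum_mul] at h2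
    rw [h2]
    congr 1
    apply Finset.sum_congr rfl
    intro i _
    have hsplit : ∏ j, φ (g j) = φ (g i) * ∏ j ∈ Finset.univ.erase i, φ (g j) :=
      (Finset.mul_prod_erase Finset.univ (fun j => φ (g j)) (Finset.mem_univ i)).symm
    rw [map_mul, map_prod, hsplit, mul_comm (φ (g i)), div_mul_eq_mul_div, ← mul_assoc,
      mul_div_cancel_right₀ _ (hg0 i)]
  -- quotient vanishes
  have hσpos : 1 ≤ ∑ j, n j := le_trans (hn 0) (Finset.single_le_sum (f := n)
    (fun j _ => Nat.zero_le _) (Finset.mem_univ 0))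
  have hdegS : (∑ ℓ, r ℓ * ∏ j ∈ Finset.univ.erase ℓ, g j).degree
      < ((∑ j, n j : ℕ) : WithBot ℕ) := by
    apply lt_of_le_of_lt (Polynomial.degree_sum_le _ _)
    rw [Finset.sup_lt_iff (by
      exact_mod_cast WithBot.bot_lt_coe _)]
    intro ℓ _
    apply lt_of_le_of_lt (Polynomial.degree_mul_le _ _)
    have hP : (∏ j ∈ Finset.univ.erase ℓ, g j).degree
        = ((∑ j ∈ Finset.univ.erase ℓ, n j : ℕ) : WithBot ℕ) := by
      rw [Polynomial.degree_prod]
      rw [Nat.cast_sum]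
      exact Finset.sum_congr rfl fun j _ => hdegg j
    rw [hP]
    have h1 : (r ℓ).degree < ((n ℓ : ℕ) : WithBot ℕ) := by
      rw [← hdegg ℓ]; exact hdeg ℓ (Finset.mem_univ ℓ)
    calc (r ℓ).degree + ((∑ j ∈ Finset.univ.erase ℓ, n j : ℕ) : WithBot ℕ)
        < ((n ℓ : ℕ) : WithBot ℕ) + ((∑ j ∈ Finset.univ.erase ℓ, n j : ℕ) : WithBot ℕ) := by
          apply WithBot.add_lt_add_right (by exact_mod_cast WithBot.coe_ne_bot) h1
      _ = ((∑ j, n j : ℕ) : WithBot ℕ) := by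
          rw [← Nat.cast_add, Finset.add_sum_erase Finset.univ n (Finset.mem_univ ℓ)]
  have hq : q = 0 := by
    by_contra hq0
    have h1 : (q * ∏ j, g j).degree = q.degree + ((∑ j, n j : ℕ) : WithBot ℕ) := by
      rw [Polynomial.degree_mul, Polynomial.degree_prod, Nat.cast_sum]
      congr 1
      exact Finset.sum_congr rfl fun j _ => hdegg j
    have h2 : ((∑ j, n j : ℕ) : WithBot ℕ) ≤ q.degree + ((∑ j, n j : ℕ) : WithBot ℕ) :=
      le_add_of_nonneg_left (Polynomial.zero_le_degree_iff.mpr hq0)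
    have h3 : q * ∏ j, g j = 1 - ∑ ℓ, r ℓ * ∏ j ∈ Finset.univ.erase ℓ, g j := by
      rw [← hpoly]; ring
    have h4 : (q * ∏ j, g j).degree < ((∑ j, n j : ℕ) : WithBot ℕ) := by
      rw [h3]
      apply lt_of_le_of_lt (Polynomial.degree_sub_le _ _)
      rw [max_lt_iff]
      constructor
      · rw [Polynomial.degree_one]
        exact_mod_cast WithBot.coe_lt_coe.mpr hσpos
      · exact hdegS
    rw [h1] at h4
    exact absurd (h2.trans_lt h4) (lt_irrefl _)
  rw [hq, zero_mul, zero_add] at hpoly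
  -- now define the coefficients
  refine ⟨fun ℓ k => (Polynomial.taylor (x ℓ) (r ℓ)).coeff (n ℓ - 1 - k), ?_, ?_⟩
  · intro ℓ
    show (Polynomial.taylor (x ℓ) (r ℓ)).coeff (n ℓ - 1 - (n ℓ - 1)) = _
    rw [Nat.sub_self, Polynomial.taylor_coeff_zero]
    -- evaluate hpoly at x ℓ
    have he := congrArg (Polynomial.eval (x ℓ)) hpoly
    rw [Polynomial.eval_one, Polynomial.eval_finset_sum] at he
    have hsingle : ∀ p ∈ Finset.univ (α := Fin (m+1)), p ≠ ℓ →
        Polynomial.eval (x ℓ) (r p * ∏ j ∈ Finset.univ.erase p, g j) = 0 := by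
      intro p _ hp
      rw [Polynomial.eval_mul, Polynomial.eval_prod]
      apply mul_eq_zero_of_right
      apply Finset.prod_eq_zero (Finset.mem_erase.mpr ⟨Ne.symm hp, Finset.mem_univ ℓ⟩)
      rw [hg]
      simp only [Polynomial.eval_pow, Polynomial.eval_sub, Polynomial.eval_X, Polynomial.eval_C,
        sub_self]
      exact zero_pow (Nat.one_le_iff_ne_zero.mp (hn ℓ))
    rw [Finset.sum_eq_single ℓ hsingle (fun h => absurd (Finset.mem_univ ℓ) h)] at he
    rw [Polynomial.eval_mul, Polynomial.eval_prod] at he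
    have hPval : ∀ j, Polynomial.eval (x ℓ) (g j) = (x ℓ - x j) ^ (n j) := by
      intro j; rw [hg]; simp
    rw [Finset.prod_congr rfl (fun j _ => hPval j)] at he
    have hPne : (∏ j ∈ Finset.univ.erase ℓ, (x ℓ - x j) ^ (n j)) ≠ 0 := by
      apply Finset.prod_ne_zero_iff.mpr
      intro j hj
      exact pow_ne_zero _ (sub_ne_zero_of_ne (fun h => (Finset.mem_erase.mp hj).1 (hx h).symm))
    field_simp at he ⊢
    linear_combination he
  · intro ζ hζ
    have hζ' : ∀ j, ζ - x j ≠ 0 := fun j => sub_ne_zero_of_ne (hζ j)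
    have he := congrArg (Polynomial.eval ζ) hpoly
    rw [Polynomial.eval_one, Polynomial.eval_finset_sum] at he
    have hQ : (∏ j, (ζ - x j) ^ (n j)) ≠ 0 :=
      Finset.prod_ne_zero_iff.mpr (fun j _ => pow_ne_zero _ (hζ' j))
    have hgeval : ∀ j, Polynomial.eval ζ (g j) = (ζ - x j) ^ (n j) := by
      intro j; rw [hg]; simp
    have he2 : ∑ ℓ, (r ℓ).eval ζ * ∏ j ∈ Finset.univ.erase ℓ, (ζ - x j) ^ (n j) = 1 := by
      rw [← he]
      apply Finset.sum_congr rfl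
      intro ℓ _
      rw [Polynomial.eval_mul, Polynomial.eval_prod]
      congr 1
      exact Finset.prod_congr rfl fun j _ => (hgeval j).symm
    have hPne : ∀ ℓ : Fin (m+1), (∏ j ∈ Finset.univ.erase ℓ, (ζ - x j) ^ (n j)) ≠ 0 :=
      fun ℓ => Finset.prod_ne_zero_iff.mpr (fun j _ => pow_ne_zero _ (hζ' j))
    calc (∏ j, (ζ - x j) ^ (n j))⁻¹
        = (∑ ℓ, (r ℓ).eval ζ * ∏ j ∈ Finset.univ.erase ℓ, (ζ - x j) ^ (n j))
            / (∏ j, (ζ - x j) ^ (n j)) := by rw [he2, one_div]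
      _ = ∑ ℓ, ((r ℓ).eval ζ * ∏ j ∈ Finset.univ.erase ℓ, (ζ - x j) ^ (n j))
            / (∏ j, (ζ - x j) ^ (n j)) := Finset.sum_div _ _ _
      _ = ∑ ℓ, (r ℓ).eval ζ / (ζ - x ℓ) ^ (n ℓ) := by
          apply Finset.sum_congr rfl
          intro ℓ _
          rw [div_eq_div_iff hQ (pow_ne_zero _ (hζ' ℓ)),
            ← Finset.mul_prod_erase Finset.univ (fun j => (ζ - x j) ^ (n j))
            (Finset.mem_univ ℓ)]
          ring
      _ = ∑ ℓ, ∑ k ∈ Finset.range (n ℓ),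
            (Polynomial.taylor (x ℓ) (r ℓ)).coeff (n ℓ - 1 - k) / (ζ - x ℓ) ^ (k + 1) := by
          apply Finset.sum_congr rfl
          intro ℓ _
          have hnat : (Polynomial.taylor (x ℓ) (r ℓ)).natDegree < n ℓ := by
            rw [Polynomial.natDegree_taylor]
            rcases eq_or_ne (r ℓ) 0 with h0 | h0
            · rw [h0, Polynomial.natDegree_zero]; exact hn ℓ
            · rw [Polynomial.natDegree_lt_iff_degree_lt h0]
              have := hdeg ℓ (Finset.mem_univ ℓ)
              rwa [hdegg ℓ] at this
          have heval : (r ℓ).eval ζ = ∑ d ∈ Finset.range (n ℓ),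
              (Polynomial.taylor (x ℓ) (r ℓ)).coeff d * (ζ - x ℓ) ^ d := by
            rw [← Polynomial.taylor_eval_sub (x ℓ)]
            exact Polynomial.eval_eq_sum_range' hnat _
          rw [heval, Finset.sum_div]
          rw [← Finset.sum_range_reflect]
          apply Finset.sum_congr rfl
          intro k hk
          have hkn : k < n ℓ := Finset.mem_range.mp hk
          have hexp : (ζ - x ℓ) ^ (n ℓ) = (ζ - x ℓ) ^ (n ℓ - 1 - k) * (ζ - x ℓ) ^ (k + 1) := by
            rw [← pow_add]
            congr 1
            omega
          rw [div_eq_div_iff (pow_ne_zero _ (hζ' ℓ)) (pow_ne_zero _ (hζ' ℓ)), hexp]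
          ring
lemma circleIntegrable_sum {ι : Type*} (s : Finset ι) (c : ℂ) (R : ℝ) (f : ι → ℂ → ℂ)
    (hf : ∀ i ∈ s, CircleIntegrable (f i) c R) :
    CircleIntegrable (fun ζ => ∑ i ∈ s, f i ζ) c R := by
  classical
  induction s using Finset.cons_induction with
  | empty => simpa using circleIntegrable_const (0 : ℂ) c R
  | cons i s his ih =>
      simp only [Finset.sum_cons]
      exact (hf i (Finset.mem_cons_self i s)).add
        (ih fun j hj => hf j (Finset.mem_cons_of_mem hj))

/-- Master evaluation of the Hermite-type contour integral via partial fractions. -/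
lemma circleIntegral_exp_div_prod {m : ℕ} (a : Fin (m+1) → ℂ) (n : Fin (m+1) → ℕ)
    (c : Fin (m+1) → ℕ → ℂ)
    (hdecomp : ∀ ζ : ℂ, (∀ j, ζ ≠ a j) → (∏ j, (ζ - a j) ^ (n j))⁻¹ =
      ∑ ℓ, ∑ k ∈ Finset.range (n ℓ), c ℓ k / (ζ - a ℓ) ^ (k + 1))
    (ρ : ℝ) (hρ : 0 < ρ) (hsep : ∀ j, ‖a j‖ ≠ ρ) (z : ℂ) :
    (∮ ζ in C(0, ρ), Complex.exp (z * ζ) / ∏ j, (ζ - a j) ^ (n j)) =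
      ∑ ℓ, ∑ k ∈ Finset.range (n ℓ), (if ‖a ℓ‖ < ρ then
        c ℓ k * ((2 * Real.pi * Complex.I) * (z ^ k / (Nat.factorial k))
          * Complex.exp (z * a ℓ)) else 0) := by
  have hne : ∀ ζ ∈ sphere (0:ℂ) ρ, ∀ j, ζ ≠ a j := by
    intro ζ hζ j h
    rw [mem_sphere_iff_norm, sub_zero, h] at hζ
    exact hsep j (by simpa using hζ)
  have step1 : (∮ ζ in C(0, ρ), Complex.exp (z * ζ) / ∏ j, (ζ - a j) ^ (n j)) =
      ∮ ζ in C(0, ρ), ∑ ℓ, ∑ k ∈ Finset.range (n ℓ),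
        c ℓ k * (Complex.exp (z * ζ) / (ζ - a ℓ) ^ (k + 1)) := by
    apply circleIntegral.integral_congr hρ.le
    intro ζ hζ
    simp only
    rw [div_eq_mul_inv, hdecomp ζ (hne ζ hζ), Finset.mul_sum]
    apply Finset.sum_congr rfl
    intro ℓ _
    rw [Finset.mul_sum]
    apply Finset.sum_congr rfl
    intro k _
    ring
  rw [step1]
  have habs : ∀ ℓ : Fin (m+1), ∀ ζ ∈ sphere (0:ℂ) |ρ|, ζ ≠ a ℓ := by
    intro ℓ ζ hζ h
    rw [mem_sphere_iff_norm, sub_zero, h] at hζ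
    exact hsep ℓ (by simpa [_root_.abs_of_nonneg hρ.le] using hζ)
  rw [circleIntegral_finset_sum _ _ _ _ (fun ℓ _ => ?_)]
  · apply Finset.sum_congr rfl
    intro ℓ _
    rw [circleIntegral_finset_sum _ _ _ _ (fun k _ =>
      circleIntegrable_mul_exp_div_pow (c ℓ k) z (a ℓ) 0 ρ (k+1) (habs ℓ))]
    apply Finset.sum_congr rfl
    intro k _
    rw [circleIntegral.integral_const_mul]
    rcases lt_or_gt_of_ne (hsep ℓ) with h | h
    · rw [if_pos h, circleIntegral_exp_div_pow_inside z (a ℓ) ρ hρ h k]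
    · rw [if_neg (not_lt.mpr h.le), circleIntegral_exp_div_pow_outside z (a ℓ) ρ hρ.le h k,
        mul_zero]
  · exact circleIntegrable_sum _ _ _ _ (fun k _ =>
      circleIntegrable_mul_exp_div_pow (c ℓ k) z (a ℓ) 0 ρ (k+1) (habs ℓ))

/-- The Hermite integral
`P_ℓ(z) = (1/2πi) ∮_{C₀} e^{zζ} / ∏ⱼ (ζ + x_ℓ − x_j)^{n_j} dζ`
over the positively oriented circle `C₀` centered at `0` of radius `r₀`. -/
noncomputable def hermitePade (m : ℕ) (x : Fin (m + 1) → ℂ) (n : Fin (m + 1) → ℕ)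
    (r₀ : ℝ) (ℓ : Fin (m + 1)) (z : ℂ) : ℂ :=
  (2 * Real.pi * Complex.I)⁻¹ *
    ∮ ζ in C(0, r₀), Complex.exp (z * ζ) / ∏ j, (ζ + x ℓ - x j) ^ (n j)

/-- The remainder integral
`R(z) = (1/2πi) ∮_{C_∞} e^{zζ} / ∏ⱼ (ζ − x_j)^{n_j} dζ`
over the positively oriented circle `C_∞` centered at `0` of radius `Rinf`. -/
noncomputable def hermiteRem (m : ℕ) (x : Fin (m + 1) → ℂ) (n : Fin (m + 1) → ℕ)
    (Rinf : ℝ) (z : ℂ) : ℂ :=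
  (2 * Real.pi * Complex.I)⁻¹ *
    ∮ ζ in C(0, Rinf), Complex.exp (z * ζ) / ∏ j, (ζ - x j) ^ (n j)

theorem stmt6 (m : ℕ) (hm : 1 ≤ m) (x : Fin (m + 1) → ℂ) (hx : Function.Injective x)
    (n : Fin (m + 1) → ℕ) (hn : ∀ j, 1 ≤ n j) (σ : ℕ) (hσ : σ = ∑ j, n j)
    (r₀ : ℝ) (hr₀ : 0 < r₀) (hr₀' : ∀ i j, i ≠ j → r₀ < dist (x i) (x j))
    (Rinf : ℝ) (hRinf : ∀ j, ‖x j‖ < Rinf) :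
    (∀ ℓ, ∃ p : Polynomial ℂ, p.degree = ((n ℓ - 1 : ℕ) : WithBot ℕ) ∧
        ∀ z, hermitePade m x n r₀ ℓ z = p.eval z) ∧
    (∀ z, hermiteRem m x n Rinf z = ∑ ℓ, hermitePade m x n r₀ ℓ z * Complex.exp (x ℓ * z)) ∧
    (∀ t, t < σ - 1 → iteratedDeriv t (hermiteRem m x n Rinf) 0 = 0) := by
  obtain ⟨c, htop, hdecomp⟩ := partial_fractions x hx n hn
  have hπ : (2 * (Real.pi : ℂ) * Complex.I) ≠ 0 := by
    simp [Real.pi_ne_zero, Complex.I_ne_zero]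
  have hRinf0 : 0 < Rinf := (norm_nonneg (x 0)).trans_lt (hRinf 0)
  -- explicit formula for hermitePade
  have hP : ∀ ℓ z, hermitePade m x n r₀ ℓ z
      = ∑ k ∈ Finset.range (n ℓ), c ℓ k * (z ^ k / (Nat.factorial k)) := by
    intro ℓ z
    unfold hermitePade
    have hint : (∮ ζ in C(0, r₀), Complex.exp (z * ζ) / ∏ j, (ζ + x ℓ - x j) ^ (n j))
        = ∮ ζ in C(0, r₀), Complex.exp (z * ζ) / ∏ j, (ζ - (x j - x ℓ)) ^ (n j) := by
      congr 1
      funext ζ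
      congr 1
      exact Finset.prod_congr rfl fun j _ => by ring_nf
    rw [hint]
    have hdecomp' : ∀ ζ : ℂ, (∀ j, ζ ≠ x j - x ℓ) →
        (∏ j, (ζ - (x j - x ℓ)) ^ (n j))⁻¹ =
          ∑ p, ∑ k ∈ Finset.range (n p), c p k / (ζ - (x p - x ℓ)) ^ (k + 1) := by
      intro ζ h
      have h2 := hdecomp (ζ + x ℓ) (fun j h' => h j (eq_sub_iff_add_eq.mpr h'))
      have e : ∀ j : Fin (m+1), ζ + x ℓ - x j = ζ - (x j - x ℓ) := fun j => by ring
      simp only [e] at h2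
      exact h2
    have hsep : ∀ j, ‖x j - x ℓ‖ ≠ r₀ := by
      intro j
      rcases eq_or_ne j ℓ with rfl | hj
      · simp [hr₀.ne]
      · have := hr₀' j ℓ hj
        rw [Complex.dist_eq] at this
        exact (this.trans_le le_rfl).ne'
    rw [circleIntegral_exp_div_prod (fun j => x j - x ℓ) n c hdecomp' r₀ hr₀ hsep z]
    have hsingle : ∀ p ∈ Finset.univ (α := Fin (m+1)), p ≠ ℓ →
        (∑ k ∈ Finset.range (n p), (if ‖x p - x ℓ‖ < r₀ then
          c p k * ((2 * Real.pi * Complex.I) * (z ^ k / (Nat.factorial k))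
            * Complex.exp (z * (x p - x ℓ))) else 0)) = 0 := by
      intro p _ hp
      apply Finset.sum_eq_zero
      intro k _
      rw [if_neg]
      rw [not_lt]
      have := hr₀' p ℓ hp
      rw [Complex.dist_eq] at this
      exact this.le
    rw [Finset.sum_eq_single ℓ hsingle (fun h => absurd (Finset.mem_univ ℓ) h)]
    rw [sub_self]
    simp only [norm_zero, mul_zero, Complex.exp_zero, mul_one, if_pos hr₀]
    rw [Finset.mul_sum]
    apply Finset.sum_congr rfl
    intro k _
    have hfac : ((Nat.factorial k : ℂ)) ≠ 0 := by exact_mod_cast (Nat.factorial_ne_zero k)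
    field_simp
  refine ⟨?_, ?_, ?_⟩
  · -- Part 1: hermitePade is a polynomial of degree n ℓ - 1
    intro ℓ
    refine ⟨∑ k ∈ Finset.range (n ℓ), Polynomial.C (c ℓ k / (Nat.factorial k))
      * Polynomial.X ^ k, ?_, ?_⟩
    · have hPne : (∏ j ∈ Finset.univ.erase ℓ, (x ℓ - x j) ^ (n j)) ≠ 0 := by
        apply Finset.prod_ne_zero_iff.mpr
        intro j hj
        exact pow_ne_zero _ (sub_ne_zero_of_ne
          (fun h => (Finset.mem_erase.mp hj).1 (hx h).symm))
      have hcne : c ℓ (n ℓ - 1) ≠ 0 := by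
        rw [htop ℓ]
        exact inv_ne_zero hPne
      apply Polynomial.degree_eq_of_le_of_coeff_ne_zero
      · apply le_trans (Polynomial.degree_sum_le _ _)
        apply Finset.sup_le
        intro k hk
        apply le_trans (Polynomial.degree_mul_le _ _)
        have h1 : (Polynomial.C (c ℓ k / (Nat.factorial k))).degree ≤ 0 :=
          Polynomial.degree_C_le
        have h2 : (Polynomial.X ^ k : Polynomial ℂ).degree ≤ (k : WithBot ℕ) :=
          le_of_eq (Polynomial.degree_X_pow k)
        calc (Polynomial.C (c ℓ k / (Nat.factorial k))).degree
              + (Polynomial.X ^ k : Polynomial ℂ).degree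
            ≤ 0 + (k : WithBot ℕ) := add_le_add h1 h2
          _ = (k : WithBot ℕ) := zero_add _
          _ ≤ ((n ℓ - 1 : ℕ) : WithBot ℕ) := by
              have : k ≤ n ℓ - 1 := by
                have := Finset.mem_range.mp hk
                omega
              exact_mod_cast Nat.cast_le.mpr this
      · rw [Polynomial.finset_sum_coeff]
        simp only [Polynomial.coeff_C_mul, Polynomial.coeff_X_pow]
        rw [Finset.sum_eq_single (n ℓ - 1)]
        · rw [if_pos rfl, mul_one]
          exact div_ne_zero hcne (by exact_mod_cast (Nat.factorial_ne_zero _))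
        · intro k _ hk
          rw [if_neg (fun h => hk h.symm), mul_zero]
        · intro h
          exact absurd (Finset.mem_range.mpr (by have := hn ℓ; omega)) h
    · intro z
      rw [hP ℓ z, Polynomial.eval_finset_sum]
      apply Finset.sum_congr rfl
      intro k _
      rw [Polynomial.eval_mul, Polynomial.eval_C, Polynomial.eval_pow, Polynomial.eval_X]
      ring
  · -- Part 2: R = ∑ P_ℓ e^{x_ℓ z}
    intro z
    unfold hermiteRem
    rw [circleIntegral_exp_div_prod x n c hdecomp Rinf hRinf0 (fun j => (hRinf j).ne) z]
    rw [Finset.mul_sum]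
    apply Finset.sum_congr rfl
    intro ℓ _
    simp only [if_pos (hRinf ℓ)]
    rw [hP ℓ z, Finset.mul_sum, Finset.sum_mul]
    apply Finset.sum_congr rfl
    intro k _
    have hfac : ((Nat.factorial k : ℂ)) ≠ 0 := by exact_mod_cast (Nat.factorial_ne_zero k)
    rw [mul_comm (x ℓ) z]
    field_simp
  · -- Part 3: vanishing at 0 to order σ - 1
    intro t ht
    have ht2 : t + 2 ≤ ∑ j, n j := by rw [← hσ]; omega
    set G : ℂ → ℂ := fun ζ => (∏ j, (ζ - x j) ^ (n j))⁻¹ with hG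
    have hGcont : ContinuousOn G (sphere (0:ℂ) Rinf) := by
      apply ContinuousOn.inv₀
      · exact (continuousOn_finset_prod _ (fun j _ =>
          ((continuous_id.sub continuous_const).pow (n j)).continuousOn))
      · intro ζ hζ
        have hζR : ‖ζ‖ = Rinf := by simpa [Complex.dist_eq] using hζ
        apply Finset.prod_ne_zero_iff.mpr
        intro j _
        apply pow_ne_zero
        apply sub_ne_zero_of_ne
        rintro rfl
        exact absurd hζR (hRinf j).ne
    have hfun : hermiteRem m x n Rinf = fun w => (2 * Real.pi * Complex.I)⁻¹ *
        ∮ ζ in C(0, Rinf), (Complex.exp (w * ζ) * G ζ) := by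
      funext w
      unfold hermiteRem
      congr 1
    rw [hfun, iteratedDeriv_circleIntegral_exp Rinf hRinf0.le G hGcont _ t 0]
    have hcongr : (∮ ζ in C(0, Rinf), (ζ ^ t * Complex.exp (0 * ζ) * G ζ))
        = ∮ ζ in C(0, Rinf), ζ ^ t * G ζ := by
      apply circleIntegral.integral_congr hRinf0.le
      intro ζ _
      simp
    rw [hcongr, hG]
    rw [circleIntegral_pow_mul_inv_prod_eq_zero x n Rinf hRinf t ht2, mul_zero]
end

section
/- Let m ≥ 1 be an integer, x₀, …, x_m pairwise distinct complex numbers, n₀, …, n_m positive integers, and let P_ℓ(z) = (1/2πi) ∮_{C₀} e^{zζ}/∏_{j=0}^{m} (ζ + x_ℓ − x_j)^{n_j} dζ, where C₀ is a circle centered at 0 of radius strictly smaller than the minimal distance between two of the x_j. Set p_{ℓ,k} = P_ℓ^{(k)}(0) for 0 ≤ k ≤ n_ℓ − 1. Then p_{ℓ,k} = Σ_{γ ∈ Λ(ℓ,k)} ∏_{p=0, p≠ℓ}^{m} ( (−1)^{γ_p}/(x_ℓ − x_p)^{γ_p + n_p} · C(γ_p + n_p − 1, n_p − 1) ). In particular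 the leading coefficient p_{ℓ,n_ℓ−1}/(n_ℓ−1)! of P_ℓ equals (1/(n_ℓ−1)!)·∏_{p≠ℓ} (x_ℓ − x_p)^{−n_p}. -/
open Finset Complex

lemma sum_adT_succ {M : Type*} [AddCommMonoid M] (K t : ℕ) (f : (Fin (K+1) → ℕ) → M) :
    ∑ γ ∈ Finset.Nat.antidiagonalTuple (K+1) t, f γ
      = ∑ p ∈ Finset.HasAntidiagonal.antidiagonal t, ∑ γ ∈ Finset.Nat.antidiagonalTuple K p.2,
          f (Fin.cons p.1 γ) := by
  rw [Finset.sum_sigma']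
  refine Finset.sum_nbij' (i := fun (γ : Fin (K+1) → ℕ) => (⟨(γ 0, ∑ i : Fin K, γ i.succ), Fin.tail γ⟩ :
      Σ _ : ℕ × ℕ, (Fin K → ℕ))) (j := fun x => Fin.cons x.1.1 x.2) ?_ ?_ ?_ ?_ ?_
  · intro γ hγ
    rw [Finset.Nat.mem_antidiagonalTuple] at hγ
    simp only [Finset.mem_sigma, Finset.HasAntidiagonal.mem_antidiagonal, Finset.Nat.mem_antidiagonalTuple]
    constructor
    · rw [← hγ, Fin.sum_univ_succ]
    · rfl
  · intro x hx
    simp only [Finset.mem_sigma, Finset.HasAntidiagonal.mem_antidiagonal, Finset.Nat.mem_antidiagonalTuple] at hx ⊢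
    rw [Fin.sum_univ_succ]
    simp only [Fin.cons_zero, Fin.cons_succ]
    rw [hx.2, hx.1]
  · intro γ _
    exact Fin.cons_self_tail γ
  · intro x hx
    simp only [Finset.mem_sigma, Finset.HasAntidiagonal.mem_antidiagonal, Finset.Nat.mem_antidiagonalTuple] at hx
    refine Sigma.ext ?_ (heq_of_eq ?_)
    · simp only [Fin.cons_zero, Fin.cons_succ]
      rw [Prod.ext_iff]
      exact ⟨rfl, hx.2⟩
    · simp [Fin.tail_cons]
  · intro γ _
    rw [Fin.cons_self_tail]

lemma cauchyProd : ∀ (K : ℕ) (c : Fin K → ℕ → ℂ), (∀ i, Summable fun γ => ‖c i γ‖) →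
    Summable (fun t => ‖∑ γ ∈ Finset.Nat.antidiagonalTuple K t, ∏ i, c i (γ i)‖) ∧
    (∑' t, ∑ γ ∈ Finset.Nat.antidiagonalTuple K t, ∏ i, c i (γ i)) = ∏ i, ∑' γ, c i γ := by
  intro K
  induction K with
  | zero =>
    intro c _
    have h : (fun t => ∑ γ ∈ Finset.Nat.antidiagonalTuple 0 t, ∏ i : Fin 0, c i (γ i))
        = fun t => if t = 0 then (1:ℂ) else 0 := by
      funext t
      cases t with
      | zero => simp
      | succ t => simp
    rw [h]
    constructor
    · apply Summable.norm
      apply summable_of_ne_finset_zero (s := {0})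
      intro t ht
      simp only [Finset.mem_singleton] at ht
      obtain ⟨t', rfl⟩ := Nat.exists_eq_succ_of_ne_zero ht
      simp
    · rw [tsum_eq_single 0 (by intro t ht; simp [ht])]
      simp
  | succ K ih =>
    intro c hc
    obtain ⟨ihs, ihe⟩ := ih (fun i => c i.succ) (fun i => hc i.succ)
    have key : ∀ t, ∑ γ ∈ Finset.Nat.antidiagonalTuple (K+1) t, ∏ i, c i (γ i)
        = ∑ p ∈ Finset.HasAntidiagonal.antidiagonal t, c 0 p.1 *
            ∑ γ ∈ Finset.Nat.antidiagonalTuple K p.2, ∏ i, c i.succ (γ i) := by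
      intro t
      rw [sum_adT_succ K t (fun γ => ∏ i, c i (γ i))]
      refine Finset.sum_congr rfl fun p _ => ?_
      rw [Finset.mul_sum]
      refine Finset.sum_congr rfl fun γ _ => ?_
      rw [Fin.prod_univ_succ]
      simp [Fin.cons_zero, Fin.cons_succ]
    constructor
    · refine Summable.congr (summable_norm_sum_mul_antidiagonal_of_summable_norm
        (hc 0) ihs) fun t => ?_
      rw [key t]
    · have h2 := tsum_mul_tsum_eq_tsum_sum_antidiagonal_of_summable_norm (hc 0) ihs
      rw [Fin.prod_univ_succ, ← ihe, tsum_congr key]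
      exact h2.symm

lemma negBinom {a w : ℂ} (hw : ‖w‖ < ‖a‖) {N : ℕ} (hN : 1 ≤ N) :
    Summable (fun γ => ‖((-1)^γ / a^(γ + N) * ((γ + N - 1).choose (N-1) : ℂ)) * w^γ‖) ∧
    ∑' γ : ℕ, ((-1)^γ / a^(γ + N) * ((γ + N - 1).choose (N-1) : ℂ)) * w^γ = ((w + a)^N)⁻¹ := by
  have ha0 : (0:ℝ) < ‖a‖ := lt_of_le_of_lt (norm_nonneg w) hw
  have ha : a ≠ 0 := by simpa using ne_of_gt ha0
  have hwa : w + a ≠ 0 := by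
    intro h
    have : a = -w := by linear_combination h
    rw [this, norm_neg] at hw
    exact lt_irrefl _ hw
  have hr : ‖-w/a‖ < 1 := by
    rw [norm_div, norm_neg, div_lt_one ha0]
    exact hw
  have hterm : ∀ γ : ℕ, (a^N)⁻¹ * (((γ + (N-1)).choose (N-1) : ℂ) * (-w/a)^γ)
      = ((-1)^γ / a^(γ+N) * ((γ + N - 1).choose (N-1) : ℂ)) * w^γ := by
    intro γ
    rw [show γ + N - 1 = γ + (N-1) by omega, pow_add]
    rw [div_pow, neg_pow w]
    field_simp
  have Hsum : HasSum (fun γ => ((-1)^γ / a^(γ+N) * ((γ + N - 1).choose (N-1):ℂ)) * w^γ)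
      (((w+a)^N)⁻¹) := by
    have H := (hasSum_choose_mul_geometric_of_norm_lt_one (𝕜 := ℂ) (N-1) hr).mul_left ((a^N)⁻¹)
    rw [show (N-1)+1 = N by omega] at H
    rw [funext hterm] at H
    refine (congrArg (HasSum _) ?_).mpr H
    rw [eq_comm]
    rw [show (1:ℂ) - -w/a = (w+a)/a by field_simp; ring]
    rw [div_pow, one_div, inv_div]
    field_simp
  refine ⟨?_, Hsum.tsum_eq⟩
  have hr' : ‖‖-w/a‖‖ < 1 := by rwa [Real.norm_eq_abs, _root_.abs_of_nonneg (norm_nonneg _)]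
  have base := summable_choose_mul_geometric_of_norm_lt_one (R := ℝ) (N-1) hr'
  refine (base.mul_left ‖(a^N)⁻¹‖).congr fun γ => ?_
  rw [← hterm γ]
  simp [norm_mul, norm_pow]

lemma iteratedDeriv_polynomial (P : Polynomial ℂ) (k : ℕ) (z : ℂ) :
    iteratedDeriv k (fun w => P.eval w) z = (Polynomial.derivative^[k] P).eval z := by
  induction k generalizing P z with
  | zero => simp [iteratedDeriv_zero]
  | succ k ih =>
    rw [iteratedDeriv_succ', Function.iterate_succ_apply]
    rw [show deriv (fun w => P.eval w) = fun w => (Polynomial.derivative P).eval w from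
      funext fun w => Polynomial.deriv (p := P)]
    exact ih _ _

lemma iteratedDeriv_sum_pow (M : ℕ) (a : ℕ → ℂ) (k : ℕ) (hk : k < M) :
    iteratedDeriv k (fun z => ∑ s ∈ Finset.range M, a s * z^s) 0 = (k.factorial : ℂ) * a k := by
  have h1 : (fun z : ℂ => ∑ s ∈ Finset.range M, a s * z^s)
      = fun z => (∑ s ∈ Finset.range M, Polynomial.C (a s) * Polynomial.X^s).eval z := by
    funext z
    rw [Polynomial.eval_finset_sum]
    simp
  rw [h1, iteratedDeriv_polynomial]
  rw [← Polynomial.coeff_zero_eq_eval_zero, Polynomial.coeff_iterate_derivative]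
  rw [Nat.zero_add, Nat.descFactorial_self]
  rw [Polynomial.finset_sum_coeff]
  simp only [Polynomial.coeff_C_mul, Polynomial.coeff_X_pow]
  rw [Finset.sum_eq_single k]
  · simp [nsmul_eq_mul]
  · intro s _ hs
    simp [Ne.symm hs]
  · intro h
    exact absurd (Finset.mem_range.mpr hk) h



/-- `Λ(ℓ,k)`: the set of multi-indices `γ = (γ_p)_{p ≠ ℓ}` of nonnegative integers with
`∑_{p ≠ ℓ} γ_p = n_ℓ − k − 1`, encoded as functions `γ : Fin (m+1) → ℕ` with `γ ℓ = 0`. -/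
def lambdaSet (m : ℕ) (n : Fin (m + 1) → ℕ) (ℓ : Fin (m + 1)) (k : ℕ) :
    Finset (Fin (m + 1) → ℕ) :=
  (Finset.Nat.antidiagonalTuple (m + 1) (n ℓ - k - 1)).filter fun γ => γ ℓ = 0

theorem stmt7 (m : ℕ) (hm : 1 ≤ m) (x : Fin (m + 1) → ℂ) (hx : Function.Injective x)
    (n : Fin (m + 1) → ℕ) (hn : ∀ j, 1 ≤ n j)
    (r₀ : ℝ) (hr₀ : 0 < r₀) (hr₀' : ∀ i j, i ≠ j → r₀ < dist (x i) (x j))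
    (ℓ : Fin (m + 1)) :
    (∀ k, k ≤ n ℓ - 1 →
      iteratedDeriv k (hermitePade m x n r₀ ℓ) 0 =
        ∑ γ ∈ lambdaSet m n ℓ k, ∏ p ∈ Finset.univ.erase ℓ,
          ((-1) ^ (γ p) / (x ℓ - x p) ^ (γ p + n p) *
            ((γ p + n p - 1).choose (n p - 1) : ℂ))) ∧
    iteratedDeriv (n ℓ - 1) (hermitePade m x n r₀ ℓ) 0 / ((n ℓ - 1).factorial : ℂ) =
      ((n ℓ - 1).factorial : ℂ)⁻¹ * ∏ p ∈ Finset.univ.erase ℓ, ((x ℓ - x p) ^ (n p))⁻¹ := by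
  classical
  set N := n ℓ with hNdef
  have hNpos : 1 ≤ N := hn ℓ
  have hπ : (0:ℝ) ≤ 2 * Real.pi := by positivity
  have hdist : ∀ p, p ≠ ℓ → r₀ < ‖x ℓ - x p‖ := by
    intro p hp
    rw [← dist_eq_norm]
    exact hr₀' ℓ p (Ne.symm hp)
  set c : Fin (m+1) → ℕ → ℂ := fun p γ =>
    if p = ℓ then (if γ = 0 then 1 else 0)
    else (-1)^γ / (x ℓ - x p)^(γ + n p) * ((γ + n p - 1).choose (n p - 1) : ℂ) with hc
  set d : ℕ → ℂ := fun t => ∑ γ ∈ Finset.Nat.antidiagonalTuple (m+1) t, ∏ p, c p (γ p) with hd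
  -- Step 1: the regular part as a power series on the closed disc
  have hg : ∀ ζ : ℂ, ‖ζ‖ ≤ r₀ →
      Summable (fun t => ‖d t * ζ^t‖) ∧
      (∑' t, d t * ζ^t) = ∏ p ∈ Finset.univ.erase ℓ, ((ζ + (x ℓ - x p))^(n p))⁻¹ := by
    intro ζ hζ
    set c' : Fin (m+1) → ℕ → ℂ := fun p γ => c p γ * ζ^γ with hc'
    have hsum : ∀ p, Summable fun γ => ‖c' p γ‖ := by
      intro p
      by_cases hp : p = ℓ
      · apply summable_of_ne_finset_zero (s := {0})
        intro γ hγ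
        simp only [Finset.mem_singleton] at hγ
        simp [hc', hc, hp, hγ]
      · refine ((negBinom (a := x ℓ - x p) (w := ζ)
          (lt_of_le_of_lt hζ (hdist p hp)) (hn p)).1).congr fun γ => ?_
        simp [hc', hc, hp]
    have htsum : ∀ p, ∑' γ, c' p γ
        = if p = ℓ then 1 else ((ζ + (x ℓ - x p))^(n p))⁻¹ := by
      intro p
      by_cases hp : p = ℓ
      · rw [if_pos hp, tsum_eq_single 0 (by intro γ hγ; simp [hc', hc, hp, hγ])]
        simp [hc', hc, hp]
      · rw [if_neg hp]
        rw [← (negBinom (a := x ℓ - x p) (w := ζ)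
          (lt_of_le_of_lt hζ (hdist p hp)) (hn p)).2]
        refine tsum_congr fun γ => ?_
        simp [hc', hc, hp]
    obtain ⟨hs, he⟩ := cauchyProd (m+1) c' hsum
    have hkey : ∀ t, ∑ γ ∈ Finset.Nat.antidiagonalTuple (m+1) t, ∏ p, c' p (γ p)
        = d t * ζ^t := by
      intro t
      simp only [hd]
      rw [Finset.sum_mul]
      refine Finset.sum_congr rfl fun γ hγ => ?_
      rw [Finset.Nat.mem_antidiagonalTuple] at hγ
      simp only [hc']
      rw [Finset.prod_mul_distrib, Finset.prod_pow_eq_pow_sum, hγ]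
    constructor
    · exact hs.congr fun t => congrArg norm (hkey t)
    · calc ∑' t, d t * ζ^t
          = ∑' t, ∑ γ ∈ Finset.Nat.antidiagonalTuple (m+1) t, ∏ p, c' p (γ p) :=
            tsum_congr fun t => (hkey t).symm
        _ = ∏ p, ∑' γ, c' p γ := he
        _ = (∑' γ, c' ℓ γ) * ∏ p ∈ Finset.univ.erase ℓ, ∑' γ, c' p γ :=
            (Finset.mul_prod_erase Finset.univ _ (Finset.mem_univ ℓ)).symm
        _ = ∏ p ∈ Finset.univ.erase ℓ, ((ζ + (x ℓ - x p))^(n p))⁻¹ := by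
            rw [htsum ℓ, if_pos rfl, one_mul]
            refine Finset.prod_congr rfl fun p hp => ?_
            rw [htsum p, if_neg (Finset.mem_erase.mp hp).1]
  -- Step 2: multiply with the exponential series
  have hE : ∀ z ζ : ℂ, ‖ζ‖ ≤ r₀ →
      Summable (fun u => ‖(∑ q ∈ Finset.HasAntidiagonal.antidiagonal u,
          z^q.1 / (q.1.factorial : ℂ) * d q.2) * ζ^u‖) ∧
      ∑' u, (∑ q ∈ Finset.HasAntidiagonal.antidiagonal u, z^q.1/(q.1.factorial:ℂ) * d q.2) * ζ^u
        = Complex.exp (z*ζ) * ∏ p ∈ Finset.univ.erase ℓ, ((ζ + (x ℓ - x p))^(n p))⁻¹ := by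
    intro z ζ hζ
    obtain ⟨hgs, hge⟩ := hg ζ hζ
    have hf : Summable fun s => ‖z^s/(s.factorial:ℂ) * ζ^s‖ := by
      refine (Real.summable_pow_div_factorial ‖z*ζ‖).congr fun s => ?_
      simp only [norm_mul, norm_div, norm_pow, Complex.norm_natCast, mul_pow]
      ring
    have hfs : ∑' s, z^s/(s.factorial:ℂ) * ζ^s = Complex.exp (z*ζ) := by
      have h2 : Complex.exp (z*ζ) = ∑' s : ℕ, (z*ζ)^s / (s.factorial : ℂ) := by
        simp only [Complex.exp_eq_exp_ℂ, NormedSpace.exp_eq_tsum_div]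
      rw [h2]
      refine tsum_congr fun s => ?_
      rw [mul_pow]
      ring
    have hterm : ∀ u, ∑ q ∈ Finset.HasAntidiagonal.antidiagonal u,
        (z^q.1/(q.1.factorial:ℂ) * ζ^q.1) * (d q.2 * ζ^q.2)
        = (∑ q ∈ Finset.HasAntidiagonal.antidiagonal u, z^q.1/(q.1.factorial:ℂ) * d q.2) * ζ^u := by
      intro u
      rw [Finset.sum_mul]
      refine Finset.sum_congr rfl fun q hq => ?_
      rw [Finset.HasAntidiagonal.mem_antidiagonal] at hq
      rw [← hq, pow_add]
      ring
    constructor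
    · exact (summable_norm_sum_mul_antidiagonal_of_summable_norm hf hgs).congr
        fun u => congrArg norm (hterm u)
    · rw [← tsum_congr hterm,
        ← tsum_mul_tsum_eq_tsum_sum_antidiagonal_of_summable_norm hf hgs, hfs, hge]
  -- Step 3: evaluate the contour integral
  have hint : ∀ z : ℂ, hermitePade m x n r₀ ℓ z
      = ∑ q ∈ Finset.HasAntidiagonal.antidiagonal (N - 1), z^q.1/(q.1.factorial:ℂ) * d q.2 := by
    intro z
    set F : ℕ → ℝ → ℂ := fun u θ =>
      (∑ q ∈ Finset.HasAntidiagonal.antidiagonal u, z^q.1/(q.1.factorial:ℂ) * d q.2) *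
        (deriv (circleMap 0 r₀) θ * (circleMap 0 r₀ θ)^((u:ℤ) - N)) with hF
    have hζθ : ∀ θ : ℝ, ‖circleMap 0 r₀ θ‖ = r₀ := by
      intro θ
      rw [norm_circleMap_zero, _root_.abs_of_pos hr₀]
    have hζne : ∀ θ : ℝ, circleMap 0 r₀ θ ≠ 0 := fun θ =>
      circleMap_ne_center (ne_of_gt hr₀)
    have hpt : ∀ θ : ℝ, deriv (circleMap 0 r₀) θ •
        (Complex.exp (z * circleMap 0 r₀ θ) / ∏ j, (circleMap 0 r₀ θ + x ℓ - x j)^(n j))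
        = ∑' u, F u θ := by
      intro θ
      set ζ := circleMap 0 r₀ θ with hζdef
      have hfact : ∏ j, (ζ + x ℓ - x j)^(n j)
          = ζ^N * ∏ p ∈ Finset.univ.erase ℓ, (ζ + (x ℓ - x p))^(n p) := by
        rw [← Finset.mul_prod_erase Finset.univ _ (Finset.mem_univ ℓ)]
        congr 1
        · rw [add_sub_cancel_right]
        · refine Finset.prod_congr rfl fun p _ => ?_
          rw [add_sub_assoc]
      have hne : ∀ p ∈ Finset.univ.erase ℓ, (ζ + (x ℓ - x p))^(n p) ≠ 0 := by
        intro p hp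
        apply pow_ne_zero
        intro h0
        have h1 : ζ = -(x ℓ - x p) := by linear_combination h0
        have h2 : ‖x ℓ - x p‖ = r₀ := by rw [← norm_neg, ← h1, hζθ θ]
        exact lt_irrefl _ (h2 ▸ hdist p (Finset.mem_erase.mp hp).1)
      have hPne : (∏ p ∈ Finset.univ.erase ℓ, (ζ + (x ℓ - x p))^(n p)) ≠ 0 :=
        Finset.prod_ne_zero_iff.mpr hne
      have h1 : ∀ u : ℕ, F u θ
          = ((∑ q ∈ Finset.HasAntidiagonal.antidiagonal u, z^q.1/(q.1.factorial:ℂ) * d q.2) * ζ^u) *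
            (deriv (circleMap 0 r₀) θ * (ζ^N)⁻¹) := by
        intro u
        simp only [hF]
        rw [zpow_sub₀ (hζne θ), zpow_natCast, zpow_natCast]
        ring
      rw [tsum_congr h1, tsum_mul_right, (hE z ζ (le_of_eq (hζθ θ))).2]
      rw [smul_eq_mul, hfact, div_eq_mul_inv, mul_inv, ← Finset.prod_inv_distrib]
      ring
    have hFc : ∀ u, Continuous (F u) := by
      intro u
      apply continuous_const.mul
      apply Continuous.mul
      · rw [show deriv (circleMap 0 r₀)
          = fun θ => circleMap 0 r₀ θ * Complex.I from funext fun θ => deriv_circleMap 0 r₀ θ]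
        exact (continuous_circleMap 0 r₀).mul continuous_const
      · exact (continuous_circleMap 0 r₀).zpow₀ _ (fun θ => Or.inl (hζne θ))
    have hFint : ∀ u, MeasureTheory.Integrable (F u)
        (MeasureTheory.volume.restrict (Set.Ioc 0 (2*Real.pi))) := fun u =>
      (hFc u).integrableOn_Ioc
    have hnorm : ∀ u θ, ‖F u θ‖
        = ‖∑ q ∈ Finset.HasAntidiagonal.antidiagonal u, z^q.1/(q.1.factorial:ℂ) * d q.2‖
          * (r₀ * r₀ ^ ((u:ℤ) - N)) := by
      intro u θ
      simp only [hF]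
      rw [norm_mul, norm_mul, deriv_circleMap, norm_mul, norm_zpow, hζθ, Complex.norm_I, mul_one]
    have hbound : Summable (fun u =>
        ‖∑ q ∈ Finset.HasAntidiagonal.antidiagonal u, z^q.1/(q.1.factorial:ℂ) * d q.2‖ * r₀^u) := by
      have h3 : ‖((r₀:ℝ):ℂ)‖ ≤ r₀ := by
        rw [Complex.norm_real, Real.norm_eq_abs, _root_.abs_of_pos hr₀]
      refine ((hE z ((r₀:ℝ):ℂ) h3).1).congr fun u => ?_
      rw [norm_mul, norm_pow, Complex.norm_real, Real.norm_eq_abs, _root_.abs_of_pos hr₀]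
    have hsumint : Summable (fun u => ∫ θ, ‖F u θ‖
        ∂(MeasureTheory.volume.restrict (Set.Ioc 0 (2*Real.pi)))) := by
      have hval : ∀ u, (∫ θ, ‖F u θ‖
          ∂(MeasureTheory.volume.restrict (Set.Ioc 0 (2*Real.pi))))
          = (2*Real.pi) * (‖∑ q ∈ Finset.HasAntidiagonal.antidiagonal u, z^q.1/(q.1.factorial:ℂ) * d q.2‖
              * (r₀ * r₀^((u:ℤ) - N))) := by
        intro u
        rw [show (fun θ => ‖F u θ‖)
          = fun _ : ℝ => ‖∑ q ∈ Finset.HasAntidiagonal.antidiagonal u, z^q.1/(q.1.factorial:ℂ) * d q.2‖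
              * (r₀ * r₀^((u:ℤ) - N)) from funext fun θ => hnorm u θ]
        rw [MeasureTheory.integral_const, MeasureTheory.measureReal_restrict_apply_univ,
          Real.volume_real_Ioc, smul_eq_mul, max_eq_left (by linarith)]
        rw [sub_zero]
      rw [show (fun u => ∫ θ, ‖F u θ‖
          ∂(MeasureTheory.volume.restrict (Set.Ioc 0 (2*Real.pi))))
        = fun u => (2*Real.pi) * (‖∑ q ∈ Finset.HasAntidiagonal.antidiagonal u, z^q.1/(q.1.factorial:ℂ) * d q.2‖
            * (r₀ * r₀^((u:ℤ) - N))) from funext hval]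
      refine ((hbound.mul_left ((2*Real.pi) * r₀ * ((r₀:ℝ)^N)⁻¹)).congr fun u => ?_)
      rw [zpow_sub₀ (ne_of_gt hr₀), zpow_natCast, zpow_natCast]
      ring
    have hswap := MeasureTheory.hasSum_integral_of_summable_integral_norm
      (μ := MeasureTheory.volume.restrict (Set.Ioc 0 (2*Real.pi))) hFint hsumint
    have hIu : ∀ u : ℕ, (∫ θ, F u θ
        ∂(MeasureTheory.volume.restrict (Set.Ioc 0 (2*Real.pi))))
        = (∑ q ∈ Finset.HasAntidiagonal.antidiagonal u, z^q.1/(q.1.factorial:ℂ) * d q.2) *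
            circleIntegral (fun ζ => (ζ - 0)^((u:ℤ) - N)) 0 r₀ := by
      intro u
      simp only [hF]
      rw [MeasureTheory.integral_const_mul]
      congr 1
      simp only [circleIntegral, sub_zero, smul_eq_mul]
      rw [intervalIntegral.integral_of_le hπ]
    have hval2 : ∀ u : ℕ, circleIntegral (fun ζ => (ζ - 0)^((u:ℤ) - N)) 0 r₀
        = if u = N - 1 then 2*Real.pi*Complex.I else 0 := by
      intro u
      by_cases hu : u = N - 1
      · rw [if_pos hu]
        have h2 : (u:ℤ) - N = -1 := by omega
        rw [h2]
        have h3 := circleIntegral.integral_sub_inv_of_mem_ball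
          (c := (0:ℂ)) (w := 0) (R := r₀) (by simpa using hr₀)
        simpa [zpow_neg_one] using h3
      · rw [if_neg hu]
        refine circleIntegral.integral_sub_zpow_of_ne ?_ _ _ _
        intro h
        omega
    have htogether : (∮ ζ in C(0, r₀),
        Complex.exp (z * ζ) / ∏ j, (ζ + x ℓ - x j)^(n j))
        = (∑ q ∈ Finset.HasAntidiagonal.antidiagonal (N-1), z^q.1/(q.1.factorial:ℂ) * d q.2)
            * (2*Real.pi*Complex.I) := by
      rw [circleIntegral, intervalIntegral.integral_of_le hπ]
      rw [MeasureTheory.integral_congr_ae (Filter.Eventually.of_forall (fun θ => hpt θ))]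
      rw [← hswap.tsum_eq]
      rw [tsum_congr (fun u => (hIu u).trans (by rw [hval2 u]))]
      rw [tsum_eq_single (N-1) (by intro u hu; rw [if_neg hu, mul_zero])]
      rw [if_pos rfl]
    have h2πI : (2*(Real.pi:ℂ)*Complex.I) ≠ 0 := by
      simp [Real.pi_ne_zero, Complex.I_ne_zero]
    rw [hermitePade, htogether, mul_comm
      (∑ q ∈ Finset.HasAntidiagonal.antidiagonal (N-1), z^q.1/(q.1.factorial:ℂ) * d q.2), ← mul_assoc,
      inv_mul_cancel₀ h2πI, one_mul]
  -- Step 4: read off the iterated derivatives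
  have hpoly : hermitePade m x n r₀ ℓ
      = fun z => ∑ s ∈ Finset.range (N - 1 + 1), (d (N-1-s)/(s.factorial:ℂ)) * z^s := by
    funext z
    rw [hint z, Finset.Nat.sum_antidiagonal_eq_sum_range_succ_mk]
    refine Finset.sum_congr rfl fun s _ => ?_
    ring
  have hderiv : ∀ k, k ≤ N - 1 →
      iteratedDeriv k (hermitePade m x n r₀ ℓ) 0 = d (N-1-k) := by
    intro k hk
    rw [hpoly, iteratedDeriv_sum_pow _ _ _ (by omega)]
    have hfac : ((k.factorial : ℂ)) ≠ 0 := Nat.cast_ne_zero.mpr k.factorial_ne_zero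
    field_simp
  have hlam : ∀ k, d (N - 1 - k) = ∑ γ ∈ lambdaSet m n ℓ k, ∏ p ∈ Finset.univ.erase ℓ,
      ((-1) ^ (γ p) / (x ℓ - x p) ^ (γ p + n p) * ((γ p + n p - 1).choose (n p - 1) : ℂ)) := by
    intro k
    simp only [hd]
    rw [lambdaSet, Finset.sum_filter, show N - 1 - k = n ℓ - k - 1 from by omega]
    refine Finset.sum_congr rfl fun γ hγ => ?_
    rw [← Finset.mul_prod_erase Finset.univ _ (Finset.mem_univ ℓ)]
    by_cases h0 : γ ℓ = 0
    · rw [if_pos h0]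
      have hcl : c ℓ (γ ℓ) = 1 := by simp [hc, h0]
      rw [hcl, one_mul]
      refine Finset.prod_congr rfl fun p hp => ?_
      simp [hc, (Finset.mem_erase.mp hp).1]
    · rw [if_neg h0]
      have hcl : c ℓ (γ ℓ) = 0 := by simp [hc, h0]
      rw [hcl, zero_mul]
  have part1 : ∀ k, k ≤ n ℓ - 1 →
      iteratedDeriv k (hermitePade m x n r₀ ℓ) 0 =
        ∑ γ ∈ lambdaSet m n ℓ k, ∏ p ∈ Finset.univ.erase ℓ,
          ((-1) ^ (γ p) / (x ℓ - x p) ^ (γ p + n p) *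
            ((γ p + n p - 1).choose (n p - 1) : ℂ)) := by
    intro k hk
    rw [hderiv k hk, hlam k]
  refine ⟨part1, ?_⟩
  rw [part1 (N-1) le_rfl]
  rw [lambdaSet, show n ℓ - (N-1) - 1 = 0 from by omega,
    Finset.Nat.antidiagonalTuple_zero_right, Finset.filter_singleton,
    if_pos (show (0 : Fin (m+1) → ℕ) ℓ = 0 from rfl), Finset.sum_singleton]
  rw [div_eq_mul_inv, mul_comm]
  congr 1
  refine Finset.prod_congr rfl fun p hp => ?_
  simp [Nat.choose_self, one_div]
end

section
/- For every natural number n and every integer k with 0 ≤ k ≤ n, one has C(n,k) < 2^n·√(2/(π(n+1/2))) and C(n,k) ≤ 2^n·√(1/(n+1)). Moreover, for every integer n ≥ 1 and every 0 ≤ k ≤ n, C(n,k) ≤ 2^n·√(3/(4(n+1))). -/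
open Real Filter

noncomputable def cseq (m : ℕ) : ℝ :=
  (Nat.centralBinom m : ℝ) ^ 2 * ((m : ℝ) + 1 / 4) / 16 ^ m

lemma cseq_eq (m : ℕ) :
    cseq m = ((m : ℝ) + 1 / 4) / ((2 * m + 1) * Real.Wallis.W m) := by
  have hB : (Nat.centralBinom m : ℝ) * (m.factorial : ℝ) * (m.factorial : ℝ)
      = ((2 * m).factorial : ℝ) := by
    have := Nat.choose_mul_factorial_mul_factorial (Nat.le_mul_of_pos_left m (by norm_num : 0 < 2))
    have h2 : 2 * m - m = m := by omega
    rw [h2] at this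
    exact_mod_cast this
  have hW : Real.Wallis.W m
      = 2 ^ (4 * m) * (m.factorial : ℝ) ^ 4 / (((2 * m).factorial : ℝ) ^ 2 * (2 * m + 1)) :=
    Real.Wallis.W_eq_factorial_ratio m
  rw [cseq, hW, ← hB]
  have h1 : ((m.factorial : ℝ)) ≠ 0 := Nat.cast_ne_zero.mpr (Nat.factorial_ne_zero m)
  have h2 : ((Nat.centralBinom m : ℝ)) ≠ 0 := Nat.cast_ne_zero.mpr (Nat.centralBinom_ne_zero m)
  have h3 : (2 * (m : ℝ) + 1) ≠ 0 := by positivity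
  have h4 : ((2 : ℝ)) ^ (4 * m) = 16 ^ m := by
    rw [pow_mul]; norm_num
  rw [h4]
  field_simp

lemma cseq_strictMono : StrictMono cseq := by
  apply strictMono_nat_of_lt_succ
  intro m
  have hrec : ((m : ℝ) + 1) * (Nat.centralBinom (m + 1) : ℝ)
      = 2 * (2 * m + 1) * (Nat.centralBinom m : ℝ) := by
    have := Nat.succ_mul_centralBinom_succ m
    exact_mod_cast this
  have hBpos : (0 : ℝ) < (Nat.centralBinom m : ℝ) :=
    Nat.cast_pos.mpr (Nat.centralBinom_pos m)
  have h16 : (0 : ℝ) < 16 ^ m := by positivity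
  rw [cseq, cseq]
  rw [div_lt_div_iff₀ (by positivity) (by positivity)]
  have h16s : (16 : ℝ) ^ (m + 1) = 16 ^ m * 16 := pow_succ _ _
  rw [h16s]
  have h2 : ((m : ℝ) + 1) ^ 2 * (Nat.centralBinom (m + 1) : ℝ) ^ 2
      = 4 * (2 * (m : ℝ) + 1) ^ 2 * (Nat.centralBinom m : ℝ) ^ 2 := by
    have := congrArg (fun x : ℝ => x ^ 2) hrec
    simp only [mul_pow] at this
    nlinarith [this]
  have hm1 : (0 : ℝ) < ((m : ℝ) + 1) ^ 2 := by positivity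
  rw [← mul_lt_mul_iff_right₀ hm1]
  have h2'' : (16 : ℝ) ^ m * (((m : ℝ) + 1) ^ 2 * (Nat.centralBinom (m + 1) : ℝ) ^ 2)
        * (((m : ℝ)) + 1 + 1 / 4)
      = (16 : ℝ) ^ m * (4 * (2 * (m : ℝ) + 1) ^ 2 * (Nat.centralBinom m : ℝ) ^ 2)
        * (((m : ℝ)) + 1 + 1 / 4) := by rw [h2]
  push_cast
  push_cast at h2''
  nlinarith [h2'', mul_pos h16 (mul_pos hBpos hBpos)]

lemma cseq_tendsto : Tendsto cseq atTop (nhds (1 / Real.pi)) := by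
  have hW := Real.Wallis.tendsto_W_nhds_pi_div_two
  have h1 : Tendsto (fun m : ℕ => (2 * (m : ℝ) + 1)⁻¹) atTop (nhds 0) := by
    apply Tendsto.inv_tendsto_atTop
    apply tendsto_atTop_add_const_right
    exact (tendsto_natCast_atTop_atTop (R := ℝ)).const_mul_atTop (by norm_num)
  have h2 : Tendsto (fun m : ℕ => ((m : ℝ) + 1 / 4) / (2 * m + 1)) atTop (nhds (1 / 2)) := by
    have heq : ∀ m : ℕ, ((m : ℝ) + 1 / 4) / (2 * m + 1)
        = 1 / 2 - (1 / 4) * (2 * (m : ℝ) + 1)⁻¹ := by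
      intro m
      have h3 : (2 * (m : ℝ) + 1) ≠ 0 := by positivity
      field_simp
      ring
    simp_rw [heq]
    have := (tendsto_const_nhds (x := (1/2 : ℝ)) (f := atTop (α := ℕ))).sub
      (h1.const_mul (1/4 : ℝ))
    simpa using this
  have h4 : Tendsto (fun m : ℕ => (Real.Wallis.W m)⁻¹) atTop (nhds (Real.pi / 2)⁻¹) :=
    hW.inv₀ (by positivity)
  have h5 := h2.mul h4
  have heq2 : (fun m : ℕ => ((m : ℝ) + 1 / 4) / (2 * m + 1) * (Real.Wallis.W m)⁻¹) = cseq := by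
    funext m
    rw [cseq_eq]
    simp only [div_eq_mul_inv, mul_inv, mul_assoc]
  rw [heq2] at h5
  convert h5 using 2
  have : Real.pi ≠ 0 := Real.pi_ne_zero
  field_simp

lemma cseq_lt (m : ℕ) : cseq m < 1 / Real.pi :=
  lt_of_lt_of_le (cseq_strictMono (Nat.lt_succ_self m))
    (cseq_strictMono.monotone.ge_of_tendsto cseq_tendsto (m + 1))

lemma central_sq_lt (m : ℕ) :
    (Nat.centralBinom m : ℝ) ^ 2 * ((m : ℝ) + 1 / 4) < 16 ^ m / Real.pi := by
  have := cseq_lt m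
  rw [cseq, div_lt_div_iff₀ (by positivity) Real.pi_pos] at this
  rw [lt_div_iff₀ Real.pi_pos]
  linarith [this]

lemma sq_bound (n k : ℕ) (hk : k ≤ n) :
    ((n.choose k : ℝ)) ^ 2 * (Real.pi * ((n : ℝ) + 1 / 2)) < 4 ^ n * 2 := by
  have hmid : (n.choose k : ℝ) ≤ (n.choose (n / 2) : ℝ) :=
    Nat.cast_le.mpr (Nat.choose_le_middle k n)
  have hnn : (0 : ℝ) ≤ (n.choose k : ℝ) := Nat.cast_nonneg _
  have hpos : (0 : ℝ) < Real.pi * ((n : ℝ) + 1 / 2) := by positivity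
  have key : ((n.choose (n / 2) : ℝ)) ^ 2 * (Real.pi * ((n : ℝ) + 1 / 2)) < 4 ^ n * 2 := by
    rcases Nat.even_or_odd n with ⟨m, hm⟩ | ⟨m, hm⟩
    · subst hm
      have hdiv : (m + m) / 2 = m := by omega
      rw [hdiv]
      have hB : (m + m).choose m = Nat.centralBinom m := by
        rw [Nat.centralBinom, two_mul]
      rw [hB]
      have h16 : (4 : ℝ) ^ (m + m) = 16 ^ m := by
        rw [← two_mul, pow_mul]; norm_num
      rw [h16]
      have := central_sq_lt m
      rw [lt_div_iff₀ Real.pi_pos] at this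
      push_cast
      nlinarith [this, Real.pi_pos]
    · subst hm
      have hdiv : (2 * m + 1) / 2 = m := by omega
      rw [hdiv]
      have hB : Nat.centralBinom (m + 1) = 2 * (2 * m + 1).choose m := by
        rw [Nat.centralBinom, show 2 * (m + 1) = (2 * m + 1) + 1 from by ring,
          Nat.choose_succ_succ]
        have : (2 * m + 1).choose (m + 1) = (2 * m + 1).choose m := by
          rw [← Nat.choose_symm (by omega : m + 1 ≤ 2 * m + 1)]
          congr 1
          omega
        rw [this]
        ring
      have hBR : (Nat.centralBinom (m + 1) : ℝ) = 2 * ((2 * m + 1).choose m : ℝ) := by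
        exact_mod_cast hB
      have := central_sq_lt (m + 1)
      rw [lt_div_iff₀ Real.pi_pos, hBR] at this
      have h16 : (4 : ℝ) ^ (2 * m + 1) * 2 = (16 : ℝ) ^ (m + 1) / 2 := by
        rw [pow_succ, pow_mul, pow_succ]; ring
      rw [h16]
      have hC : (0 : ℝ) ≤ ((2 * m + 1).choose m : ℝ) := Nat.cast_nonneg _
      push_cast
      push_cast at this
      nlinarith [this, Real.pi_pos, sq_nonneg (((2 * m + 1).choose m : ℝ))]
  calc ((n.choose k : ℝ)) ^ 2 * (Real.pi * ((n : ℝ) + 1 / 2))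
      ≤ ((n.choose (n / 2) : ℝ)) ^ 2 * (Real.pi * ((n : ℝ) + 1 / 2)) := by
        apply mul_le_mul_of_nonneg_right _ hpos.le
        exact pow_le_pow_left₀ hnn hmid 2
    _ < 4 ^ n * 2 := key

theorem stmt9 (n k : ℕ) (hk : k ≤ n) :
    ((n.choose k : ℝ) < 2 ^ n * Real.sqrt (2 / (Real.pi * ((n : ℝ) + 1 / 2)))) ∧
    ((n.choose k : ℝ) ≤ 2 ^ n * Real.sqrt (1 / ((n : ℝ) + 1))) ∧
    (1 ≤ n → (n.choose k : ℝ) ≤ 2 ^ n * Real.sqrt (3 / (4 * ((n : ℝ) + 1)))) := by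
  have hnn : (0 : ℝ) ≤ (n.choose k : ℝ) := Nat.cast_nonneg _
  have hpos : (0 : ℝ) < Real.pi * ((n : ℝ) + 1 / 2) := by positivity
  have hsq := sq_bound n k hk
  have h2n : (0 : ℝ) ≤ (2 : ℝ) ^ n := by positivity
  have hsqrtpow : ∀ t : ℝ, 2 ^ n * Real.sqrt t = Real.sqrt (4 ^ n * t) := by
    intro t
    rw [show (4 : ℝ) ^ n = ((2 : ℝ) ^ n) ^ 2 from by rw [← pow_mul, mul_comm, pow_mul]; norm_num,
      Real.sqrt_mul (by positivity), Real.sqrt_sq h2n]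
  have h1 : (n.choose k : ℝ) < 2 ^ n * Real.sqrt (2 / (Real.pi * ((n : ℝ) + 1 / 2))) := by
    rw [hsqrtpow, Real.lt_sqrt hnn, mul_div_assoc', lt_div_iff₀ hpos]
    linarith [hsq]
  refine ⟨h1, ?_, ?_⟩
  · rcases Nat.eq_zero_or_pos n with rfl | hn
    · interval_cases k
      simp
    · refine le_trans h1.le (mul_le_mul_of_nonneg_left (Real.sqrt_le_sqrt ?_) h2n)
      rw [div_le_div_iff₀ hpos (by positivity)]
      have hpi := Real.pi_gt_d2
      have hn1 : (1 : ℝ) ≤ (n : ℝ) := by exact_mod_cast hn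
      nlinarith [hpi, hn1]
  · intro hn
    have hn1 : (1 : ℝ) ≤ (n : ℝ) := by exact_mod_cast hn
    rcases lt_or_ge n 3 with hn3 | hn3
    · have hch : (n.choose k : ℝ) ≤ 2 := by
        have := Nat.choose_le_middle k n
        interval_cases n <;> simp_all <;> omega
      have hone : (n.choose k : ℝ) ≤ 1 ∨ n = 2 := by
        rcases Nat.lt_or_ge n 2 with h | h
        · left
          interval_cases n <;> interval_cases k <;> norm_num
        · right; omega
      rcases hone with hone | rfl
      · refine le_trans hone ?_
        have hq : ((1 : ℝ) / 2) ≤ Real.sqrt (3 / (4 * ((n : ℝ) + 1))) := by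
          rw [Real.le_sqrt (by norm_num) (by positivity), le_div_iff₀ (by positivity)]
          have hn2 : (n : ℝ) ≤ 2 := by
            have : n ≤ 2 := by omega
            exact_mod_cast this
          nlinarith
        have h2n' : (2 : ℝ) ≤ 2 ^ n := by
          calc (2 : ℝ) = 2 ^ 1 := by norm_num
          _ ≤ 2 ^ n := by
            apply pow_le_pow_right₀ (by norm_num) hn
        nlinarith [Real.sqrt_nonneg (3 / (4 * ((n : ℝ) + 1)))]
      · have hs : Real.sqrt (3 / (4 * (((2 : ℕ) : ℝ) + 1))) = 1 / 2 := by
          rw [show (3 : ℝ) / (4 * (((2 : ℕ) : ℝ) + 1)) = (1 / 2) ^ 2 by push_cast; norm_num,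
            Real.sqrt_sq (by norm_num)]
        rw [hs]
        norm_num
        exact_mod_cast hch
    · refine le_trans h1.le (mul_le_mul_of_nonneg_left (Real.sqrt_le_sqrt ?_) h2n)
      rw [div_le_div_iff₀ hpos (by positivity)]
      have hpi := Real.pi_gt_d2
      have hn3' : (3 : ℝ) ≤ (n : ℝ) := by exact_mod_cast hn3
      nlinarith [hpi, hn3']
end

section
/- Let K and L be positive integers, let 0 ≤ k ≤ K−1 and 0 ≤ ℓ ≤ L−1, and let γ = (γ_p)_{0 ≤ p ≤ L−1, p ≠ ℓ} be a tuple of nonnegative integers with Σ_{p≠ℓ} γ_p = K−k−1. Then ∏_{p=0, p≠ℓ}^{L−1} C(γ_p + K−1, K−1) ≤ (e·min(K,L))^{K−1}. -/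
lemma aux_choose_mul (a b c d : ℕ) :
    a.choose b * c.choose d ≤ (a + c).choose (b + d) := by
  rw [Nat.add_choose_eq]
  exact Finset.single_le_sum (f := fun ij : ℕ × ℕ => a.choose ij.1 * c.choose ij.2)
    (fun i _ => Nat.zero_le _) (show ((b,d) : ℕ × ℕ) ∈ Finset.HasAntidiagonal.antidiagonal (b+d) from Finset.HasAntidiagonal.mem_antidiagonal.mpr rfl)

lemma aux_prod_choose {α : Type*} [DecidableEq α] (s : Finset α) (γ : α → ℕ) (m : ℕ) :
    ∏ p ∈ s, (γ p + m).choose (γ p) ≤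
      ((∑ p ∈ s, γ p) + m * s.card).choose (∑ p ∈ s, γ p) := by
  induction s using Finset.induction with
  | empty => simp
  | @insert a s ha ih =>
    rw [Finset.prod_insert ha, Finset.sum_insert ha, Finset.card_insert_of_notMem ha]
    calc (γ a + m).choose (γ a) * ∏ p ∈ s, (γ p + m).choose (γ p)
        ≤ (γ a + m).choose (γ a) *
          ((∑ p ∈ s, γ p) + m * s.card).choose (∑ p ∈ s, γ p) :=
          Nat.mul_le_mul_left _ ih
      _ ≤ ((γ a + m) + ((∑ p ∈ s, γ p) + m * s.card)).choose
            (γ a + ∑ p ∈ s, γ p) := aux_choose_mul _ _ _ _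
      _ = ((γ a + ∑ p ∈ s, γ p) + m * (s.card + 1)).choose (γ a + ∑ p ∈ s, γ p) := by
          ring_nf

lemma aux_choose_mono (M : ℕ) (d : ℕ) : ∀ S, (S + M).choose S ≤ (S + d + M).choose (S + d) := by
  induction d with
  | zero => simp
  | succ d ih =>
    intro S
    calc (S + M).choose S ≤ (S + d + M).choose (S + d) := ih S
      _ ≤ (S + (d + 1) + M).choose (S + (d + 1)) := by
          have : S + (d + 1) + M = (S + d + M) + 1 := by ring
          rw [this, show S + (d + 1) = (S + d) + 1 from rfl, Nat.choose_succ_succ]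
          exact Nat.le_add_right _ _

lemma aux_choose_le_pow (m : ℕ) : ∀ g, (g + m).choose g ≤ (m + 1) ^ g := by
  intro g
  induction g with
  | zero => simp
  | succ g ih =>
    have h := Nat.add_one_mul_choose_eq (g + m) g
    -- (g+m+1) * (g+m).choose g = (g+m+1).choose (g+1) * (g+1)
    have hle : (g + 1 + m).choose (g + 1) * (g + 1) ≤ (m + 1) ^ (g + 1) * (g + 1) := by
      have e1 : (g + 1 + m).choose (g + 1) * (g + 1) = (g + m + 1) * (g + m).choose g := by
        rw [show g + 1 + m = (g + m) + 1 by ring]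
        exact h.symm
      calc (g + 1 + m).choose (g + 1) * (g + 1)
          = (g + m + 1) * (g + m).choose g := e1
        _ ≤ ((g + 1) * (m + 1)) * (m + 1) ^ g := by
            apply Nat.mul_le_mul _ ih
            nlinarith
        _ = (m + 1) ^ (g + 1) * (g + 1) := by ring
    exact Nat.le_of_mul_le_mul_right hle (Nat.succ_pos g)

lemma aux_pow_le_exp_mul_factorial (m : ℕ) :
    (m : ℝ) ^ m ≤ Real.exp 1 ^ m * m.factorial := by
  induction m with
  | zero => simp
  | succ m ih =>
    have key : ((m : ℝ) + 1) ^ m ≤ Real.exp 1 * (m : ℝ) ^ m := by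
      rcases Nat.eq_zero_or_pos m with h | h
      · subst h; simpa using Real.one_le_exp (by norm_num)
      · have hm : (0 : ℝ) < m := by exact_mod_cast h
        have h1 : (m : ℝ) + 1 ≤ m * Real.exp (1 / m) := by
          have h2 := Real.add_one_le_exp (1 / (m : ℝ))
          calc (m : ℝ) + 1 = m * (1 / m + 1) := by field_simp; ring
            _ ≤ m * Real.exp (1 / m) := by
                apply mul_le_mul_of_nonneg_left h2 hm.le
        calc ((m : ℝ) + 1) ^ m ≤ ((m : ℝ) * Real.exp (1 / m)) ^ m := by
              apply pow_le_pow_left₀ (by positivity) h1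
          _ = (m : ℝ) ^ m * Real.exp (1 / m) ^ m := mul_pow _ _ _
          _ = Real.exp 1 * (m : ℝ) ^ m := by
              rw [← Real.exp_nat_mul]
              have : (m : ℝ) * (1 / m) = 1 := by field_simp
              rw [this, mul_comm]
    have hfpos : (0 : ℝ) ≤ (m.factorial : ℝ) := by positivity
    push_cast
    calc ((m : ℝ) + 1) ^ (m + 1) = ((m : ℝ) + 1) * ((m : ℝ) + 1) ^ m := by ring
      _ ≤ ((m : ℝ) + 1) * (Real.exp 1 * (m : ℝ) ^ m) := by
          apply mul_le_mul_of_nonneg_left key (by positivity)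
      _ ≤ ((m : ℝ) + 1) * (Real.exp 1 * (Real.exp 1 ^ m * m.factorial)) := by
          apply mul_le_mul_of_nonneg_left _ (by positivity)
          exact mul_le_mul_of_nonneg_left ih (Real.exp_pos 1).le
      _ = Real.exp 1 ^ (m + 1) * (((m : ℝ) + 1) * m.factorial) := by ring
      _ = Real.exp 1 ^ (m + 1) * (m + 1).factorial := by
          rw [Nat.factorial_succ]; push_cast; ring

lemma aux_choose_le_eL (m n : ℕ) :
    ((m * n).choose m : ℝ) ≤ (Real.exp 1 * n) ^ m := by
  have h1 : ((m * n).choose m : ℝ) ≤ ((m * n : ℕ) : ℝ) ^ m / m.factorial :=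
    Nat.choose_le_pow_div m (m * n)
  have hf : (0 : ℝ) < m.factorial := by positivity
  have h2 : ((m * n : ℕ) : ℝ) ^ m ≤ (Real.exp 1 * n) ^ m * m.factorial := by
    push_cast
    calc ((m : ℝ) * n) ^ m = (m : ℝ) ^ m * (n : ℝ) ^ m := mul_pow _ _ _
      _ ≤ (Real.exp 1 ^ m * m.factorial) * (n : ℝ) ^ m := by
          apply mul_le_mul_of_nonneg_right (aux_pow_le_exp_mul_factorial m) (by positivity)
      _ = (Real.exp 1 * n) ^ m * m.factorial := by rw [mul_pow]; ring
  calc ((m * n).choose m : ℝ) ≤ ((m * n : ℕ) : ℝ) ^ m / m.factorial := h1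
    _ ≤ ((Real.exp 1 * n) ^ m * m.factorial) / m.factorial := by
        gcongr
    _ = (Real.exp 1 * n) ^ m := by field_simp

theorem stmt12 (K L : ℕ) (hK : 1 ≤ K) (hL : 1 ≤ L) (k : ℕ) (hk : k ≤ K - 1)
    (ℓ : Fin L) (γ : Fin L → ℕ)
    (hγ : ∑ p ∈ Finset.univ.erase ℓ, γ p = K - k - 1) :
    ((∏ p ∈ Finset.univ.erase ℓ, (γ p + (K - 1)).choose (K - 1) : ℕ) : ℝ) ≤
      (Real.exp 1 * (min K L : ℕ)) ^ (K - 1) := by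
  set m := K - 1 with hm
  have hsym : ∀ p : Fin L, (γ p + m).choose m = (γ p + m).choose (γ p) := by
    intro p
    have h1 : γ p + m - γ p = m := by omega
    have h2 := Nat.choose_symm (Nat.le_add_right (γ p) m)
    rwa [h1] at h2
  have hprodeq : ∏ p ∈ Finset.univ.erase ℓ, (γ p + m).choose m
      = ∏ p ∈ Finset.univ.erase ℓ, (γ p + m).choose (γ p) :=
    Finset.prod_congr rfl fun p _ => hsym p
  have hS : (K - k - 1) ≤ m := by omega
  rcases le_total K L with hKL | hLK
  · -- min = K; use (m+1)^γ bound
    have hminK : min K L = K := min_eq_left hKL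
    have hb : (∏ p ∈ Finset.univ.erase ℓ, (γ p + m).choose m : ℕ) ≤ K ^ m := by
      rw [hprodeq]
      calc ∏ p ∈ Finset.univ.erase ℓ, (γ p + m).choose (γ p)
          ≤ ∏ p ∈ Finset.univ.erase ℓ, (m + 1) ^ γ p :=
            Finset.prod_le_prod' fun p _ => aux_choose_le_pow m (γ p)
        _ = (m + 1) ^ (∑ p ∈ Finset.univ.erase ℓ, γ p) := by
            rw [Finset.prod_pow_eq_pow_sum]
        _ = K ^ (K - k - 1) := by rw [hγ]; congr 1; omega
        _ ≤ K ^ m := Nat.pow_le_pow_right hK hS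
    calc ((∏ p ∈ Finset.univ.erase ℓ, (γ p + m).choose m : ℕ) : ℝ)
        ≤ ((K : ℝ)) ^ m := by exact_mod_cast hb
      _ ≤ (Real.exp 1 * K) ^ m := by
          apply pow_le_pow_left₀ (by positivity)
          have h1 : (1:ℝ) ≤ Real.exp 1 := Real.one_le_exp (by norm_num)
          have h2 : (1:ℝ) ≤ K := by exact_mod_cast hK
          nlinarith
      _ = (Real.exp 1 * (min K L : ℕ)) ^ m := by rw [hminK]
  · -- min = L; use C(mL, m) bound
    have hminL : min K L = L := min_eq_right hLK
    have hcard : (Finset.univ.erase ℓ).card = L - 1 := by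
      rw [Finset.card_erase_of_mem (Finset.mem_univ ℓ)]
      simp
    have hb : (∏ p ∈ Finset.univ.erase ℓ, (γ p + m).choose m : ℕ) ≤ (m * L).choose m := by
      rw [hprodeq]
      calc ∏ p ∈ Finset.univ.erase ℓ, (γ p + m).choose (γ p)
          ≤ ((K - k - 1) + m * (L - 1)).choose (K - k - 1) := by
            have := aux_prod_choose (Finset.univ.erase ℓ) γ m
            rwa [hγ, hcard] at this
        _ ≤ ((K - k - 1) + (m - (K - k - 1)) + m * (L - 1)).choose
              ((K - k - 1) + (m - (K - k - 1))) := aux_choose_mono _ _ _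
        _ = (m + m * (L - 1)).choose m := by
            congr 1 <;> omega
        _ = (m * L).choose m := by
            congr 1
            obtain ⟨L', rfl⟩ := Nat.exists_eq_add_of_le hL
            simp [Nat.mul_add, Nat.mul_comm]
            ring
    calc ((∏ p ∈ Finset.univ.erase ℓ, (γ p + m).choose m : ℕ) : ℝ)
        ≤ ((m * L).choose m : ℝ) := by exact_mod_cast hb
      _ ≤ (Real.exp 1 * L) ^ m := aux_choose_le_eL m L
      _ = (Real.exp 1 * (min K L : ℕ)) ^ m := by rw [hminL]
end
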